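/- arXiv:1503.04616 — 5 statements merged into one kernel-verified Lean document; each statement's English description precedes it below -/
import Mathlib

section
/- Assume ϑ(ℤ) > 1, the support of ϑ contains at least two points, and 0 ∈ 𝒟_φ. Then inf_{β > 0} φ(β)/β > φ'(0) and sup_{β < 0} φ(β)/β < φ'(0), where φ(β)/β is interpreted as +∞ when β > 0 and φ(β) = +∞, and as −∞ when β < 0 and φ(β) = +∞. -/
open Real Filter Topology MeasureTheory Metric Set

noncomputable section

/-- The cumulant generating function `φ(β) = log ∑_{k∈ℤ} e^{βk} θ(k)` of the measure on `ℤ`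
with mass function `θ`.  (Outside the finiteness set the `tsum` is junk; the statements only
use `cgf` on the finiteness set or its interior.) -/
def cgf (θ : ℤ → ℝ) (β : ℝ) : ℝ := Real.log (∑' k : ℤ, Real.exp (β * k) * θ k)

/-- The set `{β : φ(β) < ∞}`. -/
def finiteSet (θ : ℤ → ℝ) : Set ℝ := {β : ℝ | Summable fun k : ℤ => Real.exp (β * k) * θ k}

/-- `𝒟_φ`, the interior of the set where `φ` is finite. -/
def cgfDom (θ : ℤ → ℝ) : Set ℝ := interior (finiteSet θ)

/-- `κ_j(β) = φ^{(j)}(β)`. -/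
def kappa (θ : ℤ → ℝ) (j : ℕ) (β : ℝ) : ℝ := iteratedDeriv j (cgf θ) β

/-- `μ(β) = φ'(β)`. -/
def muT (θ : ℤ → ℝ) (β : ℝ) : ℝ := deriv (cgf θ) β

/-- `σ(β) = √(φ''(β))`. -/
def sigmaT (θ : ℤ → ℝ) (β : ℝ) : ℝ := Real.sqrt (iteratedDeriv 2 (cgf θ) β)

/-- The standardized coordinate `x_n(k) = (k - μ(β) n)/(σ(β) √n)`. -/
def xnk (θ : ℤ → ℝ) (β : ℝ) (n : ℕ) (k : ℤ) : ℝ :=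
  ((k : ℝ) - muT θ β * n) / (sigmaT θ β * Real.sqrt n)

/-- The support of `θ` contains at least two points. -/
def twoPointSupport (θ : ℤ → ℝ) : Prop := ∃ k₁ k₂ : ℤ, k₁ ≠ k₂ ∧ θ k₁ ≠ 0 ∧ θ k₂ ≠ 0

/-- `θ` has lattice span 1: there is no `h ∈ {2,3,…}` and `a ∈ ℤ` such that `θ` is
concentrated on the arithmetic progression `a + hℤ`. -/
def latticeSpanOne (θ : ℤ → ℝ) : Prop :=
  ¬ ∃ (h : ℕ) (a : ℤ), 2 ≤ h ∧ ∀ k : ℤ, θ k ≠ 0 → (h : ℤ) ∣ (k - a)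

/-- `n`-fold convolution power of the measure with mass function `θ`. -/
def convPow (θ : ℤ → ℝ) : ℕ → ℤ → ℝ
  | 0, k => if k = 0 then 1 else 0
  | n + 1, k => ∑' j : ℤ, convPow θ n j * θ (k - j)

/-- The Edgeworth polynomials `P̃_j(z)`, characterized by the formal power series identity
`exp (∑_{j≥1} κ_{j+2} z^{j+2} u^j / (j+2)!) = ∑_{j≥0} P̃_j(z) u^j` in `u`; equivalently
(differentiating the identity in `u` and comparing coefficients) by `P̃_0 = 1` together with the
recursion `(j+1) P̃_{j+1}(z) = ∑_{i=0}^{j} (i+1) (κ_{i+3} z^{i+3}/(i+3)!) P̃_{j-i}(z)`. -/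
def edgeworthP (κ : ℕ → ℝ) : ℕ → Polynomial ℝ
  | 0 => 1
  | j + 1 =>
      Polynomial.C (((j : ℝ) + 1)⁻¹) *
        ∑ i ∈ Finset.range (j + 1),
          Polynomial.C (((i : ℝ) + 1) * (κ (i + 3) / (Nat.factorial (i + 3)))) *
            Polynomial.X ^ (i + 3) * edgeworthP κ (j - i)
  termination_by j => j
  decreasing_by omega

/-- Substituting the operator `-s⁻¹ d/dx` for the variable of the polynomial `P` and applying
the result to the Gaussian kernel `e^{-x²/2}` produces `(gaussianSubst s P).eval x * e^{-x²/2}`: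
indeed, since `(-d/dx)^l e^{-x²/2} = He_l(x) e^{-x²/2}` (probabilists' Hermite polynomials),
the monomial `z^l` contributes `s⁻ˡ He_l(x)`. -/
def gaussianSubst (s : ℝ) (P : Polynomial ℝ) : Polynomial ℝ :=
  ∑ l ∈ Finset.range (P.natDegree + 1),
    Polynomial.C (P.coeff l * s⁻¹ ^ l) * (Polynomial.hermite l).map (Int.castRingHom ℝ)

/-- `q_j(·;β)`, determined by `[P̃_j(-σ(β)⁻¹ d/dx; β) e^{-x²/2}](x) = q_j(x;β) e^{-x²/2}`. -/
def qpoly (θ : ℤ → ℝ) (j : ℕ) (β : ℝ) : Polynomial ℝ :=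
  gaussianSubst (sigmaT θ β) (edgeworthP (fun i => kappa θ i β) j)

/-- `Q_{m,j}(·;β)`, determined by
`[(-σ(β)⁻¹ d/dx)^m P̃_{j-m}(-σ(β)⁻¹ d/dx; β) e^{-x²/2}](x) = Q_{m,j}(x;β) e^{-x²/2}`. -/
def Qpoly (θ : ℤ → ℝ) (m j : ℕ) (β : ℝ) : Polynomial ℝ :=
  gaussianSubst (sigmaT θ β) (Polynomial.X ^ m * edgeworthP (fun i => kappa θ i β) (j - m))

/-- `f_n(s;β)`, the characteristic function of the standardized sum
`(S_n^β - nμ(β))/(σ(β)√n)` of `n` i.i.d. copies of the exponentially tilted variable `Z^β`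
with law `P[Z^β = k] = e^{βk - φ(β)} θ(k)`; by independence it equals the `n`-th power of the
characteristic function of one standardized summand.  (The formula makes sense for complex `s`.) -/
def charFn (θ : ℤ → ℝ) (n : ℕ) (s : ℂ) (β : ℝ) : ℂ :=
  (∑' k : ℤ,
      Complex.exp (Complex.I * s * ((((k : ℝ) - muT θ β) : ℝ) : ℂ) /
        (((sigmaT θ β * Real.sqrt n : ℝ)) : ℂ)) *
      ((Real.exp (β * k - cgf θ β) * θ k : ℝ) : ℂ)) ^ n

/-- `Φ(z) = ∑_{k∈ℤ} e^{zk} θ(k)`. -/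
def PhiC (θ : ℤ → ℝ) (z : ℂ) : ℂ := ∑' k : ℤ, Complex.exp (z * k) * (θ k : ℂ)



/-- Auxiliary bound: `|k| e^{yk} ≤ (2/a)(e^{ak} + e^{-ak})` for `|y| ≤ a/2`. -/
lemma aux_expBound (a : ℝ) (ha : 0 < a) (y : ℝ) (hy : |y| ≤ a/2) (k : ℤ) :
    |(k:ℝ)| * Real.exp (y * k) ≤ (2/a) * (Real.exp (a * k) + Real.exp (-(a * k))) := by
  have h1 : y * k ≤ (a/2) * |(k:ℝ)| := by
    calc y * k ≤ |y * k| := le_abs_self _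
    _ = |y| * |(k:ℝ)| := abs_mul _ _
    _ ≤ (a/2) * |(k:ℝ)| := by
        apply mul_le_mul_of_nonneg_right hy (abs_nonneg _)
  have h2 : |(k:ℝ)| ≤ (2/a) * Real.exp ((a/2) * |(k:ℝ)|) := by
    have := Real.add_one_le_exp ((a/2) * |(k:ℝ)|)
    have hnn : 0 ≤ (a/2) * |(k:ℝ)| := by positivity
    rw [div_mul_eq_mul_div, le_div_iff₀ ha]
    nlinarith [Real.exp_pos ((a/2) * |(k:ℝ)|)]
  have h3 : Real.exp (y * k) ≤ Real.exp ((a/2) * |(k:ℝ)|) := Real.exp_le_exp.mpr h1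
  have h4 : |(k:ℝ)| * Real.exp (y * k) ≤ (2/a) * Real.exp (a * |(k:ℝ)|) := by
    calc |(k:ℝ)| * Real.exp (y * k)
        ≤ ((2/a) * Real.exp ((a/2) * |(k:ℝ)|)) * Real.exp ((a/2) * |(k:ℝ)|) := by
          apply mul_le_mul h2 h3 (Real.exp_pos _).le (by positivity)
    _ = (2/a) * Real.exp (a * |(k:ℝ)|) := by
          rw [mul_assoc, ← Real.exp_add]; ring_nf
  refine h4.trans ?_
  have h5 : Real.exp (a * |(k:ℝ)|) ≤ Real.exp (a * k) + Real.exp (-(a * k)) := by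
    rcases abs_cases (k:ℝ) with ⟨h, _⟩ | ⟨h, _⟩
    · rw [h]; nlinarith [Real.exp_pos (-(a * (k:ℝ)))]
    · rw [h, mul_neg, ← neg_mul]; nlinarith [Real.exp_pos (a * (k:ℝ))]
  have : (0:ℝ) ≤ 2/a := by positivity
  nlinarith

lemma aux_deriv_g (θ : ℤ → ℝ) (hθ0 : ∀ k, 0 ≤ θ k) (hθs : Summable θ)
    (a : ℝ) (ha : 0 < a) (hSa : Summable fun k : ℤ => Real.exp (a * k) * θ k)
    (hSna : Summable fun k : ℤ => Real.exp (-(a * k)) * θ k) :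
    HasDerivAt (fun z : ℝ => ∑' k : ℤ, Real.exp (z * k) * θ k)
      (∑' k : ℤ, (k : ℝ) * θ k) 0 := by
  set u : ℤ → ℝ := fun k => (2/a) * ((Real.exp (a * k) + Real.exp (-(a * k))) * θ k) with hu_def
  have hu : Summable u := by
    apply Summable.mul_left
    exact (hSa.add hSna).congr (fun k => by ring)
  have key : HasDerivAt (fun z : ℝ => ∑' k : ℤ, Real.exp (z * k) * θ k)
      (∑' k : ℤ, Real.exp ((0:ℝ) * k) * k * θ k) 0 := by
    apply hasDerivAt_tsum_of_isPreconnected hu (Metric.isOpen_ball (x := (0:ℝ)) (ε := a/2))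
      ((convex_ball (0:ℝ) (a/2)).isPreconnected)
      (g' := fun (k : ℤ) (y : ℝ) => Real.exp (y * k) * k * θ k)
      (y₀ := (0:ℝ))
    · intro k y hy
      have h1 : HasDerivAt (fun y : ℝ => y * k) ((k:ℝ)) y := by
        simpa using (hasDerivAt_id y).mul_const ((k:ℝ))
      have h2 := (h1.exp).mul_const (θ k)
      simpa [mul_assoc] using h2
    · intro k y hy
      have hy' : |y| ≤ a/2 := by
        have := mem_ball_iff_norm.mp hy
        simp only [sub_zero, Real.norm_eq_abs] at this
        linarith
      have hb := aux_expBound a ha y hy' k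
      have hθk := hθ0 k
      have : ‖Real.exp (y * k) * k * θ k‖ = |(k:ℝ)| * Real.exp (y * k) * θ k := by
        rw [Real.norm_eq_abs, abs_mul, abs_mul, abs_of_nonneg (Real.exp_pos _).le,
          abs_of_nonneg hθk]
        ring
      rw [this, hu_def]
      calc |(k:ℝ)| * Real.exp (y * k) * θ k
          ≤ ((2/a) * (Real.exp (a * k) + Real.exp (-(a * k)))) * θ k :=
            mul_le_mul_of_nonneg_right hb hθk
        _ = (2/a) * ((Real.exp (a * k) + Real.exp (-(a * k))) * θ k) := by ring
    · exact mem_ball_self (by positivity)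
    · exact hθs.congr (fun k => by simp)
    · exact mem_ball_self (by positivity)
  have : (∑' k : ℤ, Real.exp ((0:ℝ) * k) * k * θ k) = ∑' k : ℤ, (k : ℝ) * θ k := by
    congr 1; funext k; simp
  rwa [this] at key

lemma aux_deriv_cgf (θ : ℤ → ℝ) (hθ0 : ∀ k, 0 ≤ θ k) (hθs : Summable θ)
    (hM : 0 < ∑' k : ℤ, θ k)
    (a : ℝ) (ha : 0 < a) (hSa : Summable fun k : ℤ => Real.exp (a * k) * θ k)
    (hSna : Summable fun k : ℤ => Real.exp (-(a * k)) * θ k) :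
    deriv (cgf θ) 0 = (∑' k : ℤ, (k : ℝ) * θ k) / (∑' k : ℤ, θ k) := by
  have hg := aux_deriv_g θ hθ0 hθs a ha hSa hSna
  have hg0 : (∑' k : ℤ, Real.exp ((0:ℝ) * k) * θ k) = ∑' k : ℤ, θ k := by
    congr 1; funext k; simp
  have hne : (∑' k : ℤ, Real.exp ((0:ℝ) * k) * θ k) ≠ 0 := by rw [hg0]; exact hM.ne'
  have := hg.log hne
  rw [hg0] at this
  exact this.deriv

lemma aux_tangent (θ : ℤ → ℝ) (hθ0 : ∀ k, 0 ≤ θ k) (hθs : Summable θ)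
    (hM : 0 < ∑' k : ℤ, θ k)
    (hksum : Summable fun k : ℤ => (k : ℝ) * θ k)
    (β : ℝ) (hβ : Summable fun k : ℤ => Real.exp (β * k) * θ k) :
    Real.log (∑' k : ℤ, θ k) + β * ((∑' k : ℤ, (k:ℝ) * θ k) / (∑' k : ℤ, θ k))
      ≤ cgf θ β := by
  set M := ∑' k : ℤ, θ k with hMdef
  set T := ∑' k : ℤ, (k:ℝ) * θ k with hTdef
  set m := T / M with hmdef
  have hTm : T = m * M := by rw [hmdef, div_mul_cancel₀ _ hM.ne']
  have hpt : ∀ k : ℤ, Real.exp (β * m) * (θ k + (β * ((k:ℝ) * θ k) - (β * m) * θ k))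
      ≤ Real.exp (β * k) * θ k := by
    intro k
    have h1 : 1 + β * ((k:ℝ) - m) ≤ Real.exp (β * ((k:ℝ) - m)) := by
      have := Real.add_one_le_exp (β * ((k:ℝ) - m)); linarith
    have h2 : Real.exp (β * m) * (1 + β * ((k:ℝ) - m)) ≤ Real.exp (β * k) := by
      calc Real.exp (β * m) * (1 + β * ((k:ℝ) - m))
          ≤ Real.exp (β * m) * Real.exp (β * ((k:ℝ) - m)) :=
            mul_le_mul_of_nonneg_left h1 (Real.exp_pos _).le
        _ = Real.exp (β * k) := by rw [← Real.exp_add]; ring_nf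
    have hθk := hθ0 k
    calc Real.exp (β * m) * (θ k + (β * ((k:ℝ) * θ k) - (β * m) * θ k))
        = (Real.exp (β * m) * (1 + β * ((k:ℝ) - m))) * θ k := by ring
      _ ≤ Real.exp (β * k) * θ k := mul_le_mul_of_nonneg_right h2 hθk
  have hsum1 : Summable fun k : ℤ => θ k + (β * ((k:ℝ) * θ k) - (β * m) * θ k) :=
    hθs.add ((hksum.mul_left β).sub (hθs.mul_left (β * m)))
  have hsumL : Summable fun k : ℤ =>
      Real.exp (β * m) * (θ k + (β * ((k:ℝ) * θ k) - (β * m) * θ k)) :=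
    hsum1.mul_left _
  have hle := Summable.tsum_le_tsum hpt hsumL hβ
  have hL : (∑' k : ℤ, Real.exp (β * m) * (θ k + (β * ((k:ℝ) * θ k) - (β * m) * θ k)))
      = Real.exp (β * m) * M := by
    rw [tsum_mul_left]
    congr 1
    rw [Summable.tsum_add hθs ((hksum.mul_left β).sub (hθs.mul_left (β * m))),
      Summable.tsum_sub (hksum.mul_left β) (hθs.mul_left (β * m)), tsum_mul_left, tsum_mul_left]
    rw [← hTdef, ← hMdef, hTm]; ring
  rw [hL] at hle
  have hpos : 0 < Real.exp (β * m) * M := by positivity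
  calc Real.log M + β * m = Real.log (Real.exp (β * m) * M) := by
        rw [Real.log_mul (Real.exp_pos _).ne' hM.ne', Real.log_exp]; ring
    _ ≤ cgf θ β := Real.log_le_log hpos hle

lemma aux_support_above (θ : ℤ → ℝ) (hθ0 : ∀ k, 0 ≤ θ k) (hθs : Summable θ)
    (hM : 0 < ∑' k : ℤ, θ k)
    (hksum : Summable fun k : ℤ => (k : ℝ) * θ k)
    (hsupp : ∃ k₁ k₂ : ℤ, k₁ ≠ k₂ ∧ θ k₁ ≠ 0 ∧ θ k₂ ≠ 0) :
    ∃ k : ℤ, θ k ≠ 0 ∧ (∑' k : ℤ, (k:ℝ) * θ k) / (∑' k : ℤ, θ k) < k := by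
  set M := ∑' k : ℤ, θ k with hMdef
  set T := ∑' k : ℤ, (k:ℝ) * θ k with hTdef
  set m := T / M with hmdef
  by_contra hcon
  push_neg at hcon
  obtain ⟨k₁, k₂, hne, h1, h2⟩ := hsupp
  wlog hlt : k₁ < k₂ generalizing k₁ k₂
  · exact this k₂ k₁ hne.symm h2 h1 (by omega)
  have hk1m : (k₁ : ℝ) < m := by
    have h2m : (k₂ : ℝ) ≤ m := hcon k₂ h2
    have : (k₁ : ℝ) < k₂ := by exact_mod_cast hlt
    linarith
  have hpt : ∀ k : ℤ, (k:ℝ) * θ k ≤ m * θ k := by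
    intro k
    by_cases h : θ k = 0
    · simp [h]
    · exact mul_le_mul_of_nonneg_right (hcon k h) (hθ0 k)
  have hstrict : (k₁:ℝ) * θ k₁ < m * θ k₁ := by
    have : 0 < θ k₁ := lt_of_le_of_ne (hθ0 k₁) (Ne.symm h1)
    exact mul_lt_mul_of_pos_right hk1m this
  have hlt2 : T < m * M := by
    have := Summable.tsum_lt_tsum hpt hstrict hksum (hθs.mul_left m)
    rwa [tsum_mul_left, ← hMdef] at this
  have hTm : T = m * M := by rw [hmdef, div_mul_cancel₀ _ hM.ne']
  linarith

lemma aux_support_below (θ : ℤ → ℝ) (hθ0 : ∀ k, 0 ≤ θ k) (hθs : Summable θ)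
    (hM : 0 < ∑' k : ℤ, θ k)
    (hksum : Summable fun k : ℤ => (k : ℝ) * θ k)
    (hsupp : ∃ k₁ k₂ : ℤ, k₁ ≠ k₂ ∧ θ k₁ ≠ 0 ∧ θ k₂ ≠ 0) :
    ∃ k : ℤ, θ k ≠ 0 ∧ (k:ℝ) < (∑' k : ℤ, (k:ℝ) * θ k) / (∑' k : ℤ, θ k) := by
  set M := ∑' k : ℤ, θ k with hMdef
  set T := ∑' k : ℤ, (k:ℝ) * θ k with hTdef
  set m := T / M with hmdef
  by_contra hcon
  push_neg at hcon
  obtain ⟨k₁, k₂, hne, h1, h2⟩ := hsupp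
  wlog hlt : k₁ < k₂ generalizing k₁ k₂
  · exact this k₂ k₁ hne.symm h2 h1 (by omega)
  have hk2m : m < (k₂ : ℝ) := by
    have h1m : m ≤ (k₁ : ℝ) := hcon k₁ h1
    have : (k₁ : ℝ) < k₂ := by exact_mod_cast hlt
    linarith
  have hpt : ∀ k : ℤ, m * θ k ≤ (k:ℝ) * θ k := by
    intro k
    by_cases h : θ k = 0
    · simp [h]
    · exact mul_le_mul_of_nonneg_right (hcon k h) (hθ0 k)
  have hstrict : m * θ k₂ < (k₂:ℝ) * θ k₂ := by
    have : 0 < θ k₂ := lt_of_le_of_ne (hθ0 k₂) (Ne.symm h2)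
    exact mul_lt_mul_of_pos_right hk2m this
  have hlt2 : m * M < T := by
    have := Summable.tsum_lt_tsum hpt hstrict (hθs.mul_left m) hksum
    rwa [tsum_mul_left, ← hMdef] at this
  have hTm : T = m * M := by rw [hmdef, div_mul_cancel₀ _ hM.ne']
  linarith

lemma aux_pointBound (θ : ℤ → ℝ) (hθ0 : ∀ k, 0 ≤ θ k) (β : ℝ) (k : ℤ)
    (hβ : Summable fun j : ℤ => Real.exp (β * j) * θ j) (hk : 0 < θ k) :
    β * k + Real.log (θ k) ≤ cgf θ β := by
  have h1 : Real.exp (β * k) * θ k ≤ ∑' j : ℤ, Real.exp (β * j) * θ j :=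
    Summable.le_tsum hβ k (fun j _ => mul_nonneg (Real.exp_pos _).le (hθ0 j))
  have := Real.log_le_log (by positivity) h1
  rwa [Real.log_mul (Real.exp_pos _).ne' hk.ne', Real.log_exp] at this

/-- `inf_{β>0} φ(β)/β > φ'(0)` and `sup_{β<0} φ(β)/β < φ'(0)`.
Values `β` with `φ(β) = +∞` contribute `+∞` (resp. `-∞`) and so do not affect the infimum
(resp. supremum); hence the claim is equivalent to the existence of `c > φ'(0)` with
`c ≤ φ(β)/β` for all `β > 0` where `φ` is finite, and symmetrically for `β < 0`. -/
theorem gamma_plus_minus_bounds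
    (θ : ℤ → ℝ) (hθ0 : ∀ k, 0 ≤ θ k) (hθs : Summable θ) (hmass : 1 < ∑' k : ℤ, θ k)
    (hsupp : twoPointSupport θ) (h0 : (0 : ℝ) ∈ cgfDom θ) :
    (∃ c : ℝ, deriv (cgf θ) 0 < c ∧
        ∀ β : ℝ, 0 < β → β ∈ finiteSet θ → c ≤ cgf θ β / β) ∧
    (∃ c : ℝ, c < deriv (cgf θ) 0 ∧
        ∀ β : ℝ, β < 0 → β ∈ finiteSet θ → cgf θ β / β ≤ c) := by
  -- setup
  have hθsE : Summable θ := hθs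
  set M := ∑' k : ℤ, θ k with hMdef
  have hM : 0 < M := lt_trans one_pos hmass
  have hlogM : 0 < Real.log M := Real.log_pos hmass
  -- a ball around 0 inside the finiteness set
  obtain ⟨δ, hδ, hball⟩ := Metric.isOpen_iff.mp isOpen_interior 0 h0
  set a := δ/2 with hadef
  have ha : 0 < a := by positivity
  have hmem : ∀ y : ℝ, |y| < δ → Summable fun k : ℤ => Real.exp (y * k) * θ k := by
    intro y hy
    have : y ∈ Metric.ball (0:ℝ) δ := by
      simpa [Metric.mem_ball, Real.dist_eq] using hy
    have hmemf : y ∈ finiteSet θ := interior_subset (hball this)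
    exact hmemf
  have hSa : Summable fun k : ℤ => Real.exp (a * k) * θ k := by
    apply hmem; rw [abs_of_pos ha]; simp [hadef]; linarith
  have hSna : Summable fun k : ℤ => Real.exp (-(a * k)) * θ k := by
    have := hmem (-a) (by rw [abs_neg, abs_of_pos ha]; simp [hadef]; linarith)
    exact this.congr (fun k => by rw [neg_mul])
  -- summability of k θ k
  have hksum : Summable fun k : ℤ => (k : ℝ) * θ k := by
    apply Summable.of_norm_bounded
      (g := fun k : ℤ => (2/a) * ((Real.exp (a * k) + Real.exp (-(a * k))) * θ k))
    · exact Summable.mul_left _ ((hSa.add hSna).congr (fun k => by ring))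
    · intro k
      have hb := aux_expBound a ha 0 (by rw [abs_zero]; positivity) k
      rw [zero_mul, Real.exp_zero, mul_one] at hb
      have hθk := hθ0 k
      calc ‖(k:ℝ) * θ k‖ = |(k:ℝ)| * θ k := by
            rw [Real.norm_eq_abs, abs_mul, abs_of_nonneg hθk]
        _ ≤ ((2/a) * (Real.exp (a * k) + Real.exp (-(a * k)))) * θ k :=
            mul_le_mul_of_nonneg_right hb hθk
        _ = (2/a) * ((Real.exp (a * k) + Real.exp (-(a * k))) * θ k) := by ring
  set T := ∑' k : ℤ, (k:ℝ) * θ k with hTdef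
  set m := T / M with hmdef
  have hderiv : deriv (cgf θ) 0 = m := aux_deriv_cgf θ hθ0 hθsE hM a ha hSa hSna
  rw [hderiv]
  have htan : ∀ β : ℝ, β ∈ finiteSet θ → Real.log M + β * m ≤ cgf θ β := by
    intro β hβ
    exact aux_tangent θ hθ0 hθsE hM hksum β hβ
  constructor
  · -- positive side
    obtain ⟨k0, hk0ne, hk0m⟩ := aux_support_above θ hθ0 hθsE hM hksum hsupp
    have hk0pos : 0 < θ k0 := lt_of_le_of_ne (hθ0 k0) (Ne.symm hk0ne)
    set L := Real.log (θ k0) with hLdef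
    set ε := ((k0:ℝ) - m)/2 with hεdef
    have hε : 0 < ε := by rw [hεdef]; simp only [hmdef, hTdef, hMdef] at hk0m ⊢; linarith
    set B := (|L| + 1)/ε with hBdef
    have hB : 0 < B := by positivity
    refine ⟨m + min ε (Real.log M / B), ?_, ?_⟩
    · have : 0 < min ε (Real.log M / B) := lt_min hε (by positivity)
      linarith
    · intro β hβpos hβ
      rw [le_div_iff₀ hβpos]
      have h1 := htan β hβ
      have h2 : β * k0 + L ≤ cgf θ β := aux_pointBound θ hθ0 β k0 hβ hk0pos
      have hmin1 : min ε (Real.log M / B) ≤ ε := min_le_left _ _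
      have hmin2 : min ε (Real.log M / B) ≤ Real.log M / B := min_le_right _ _
      rcases le_or_gt β B with hβB | hβB
      · have h3 : min ε (Real.log M / B) * β ≤ (Real.log M / B) * β :=
          mul_le_mul_of_nonneg_right hmin2 hβpos.le
        have h4 : (Real.log M / B) * β ≤ (Real.log M / B) * B :=
          mul_le_mul_of_nonneg_left hβB (by positivity)
        have h5 : (Real.log M / B) * B = Real.log M := div_mul_cancel₀ _ hB.ne'
        nlinarith
      · have h3 : min ε (Real.log M / B) * β ≤ ε * β :=
          mul_le_mul_of_nonneg_right hmin1 hβpos.le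
        have h4 : ε * B < ε * β := mul_lt_mul_of_pos_left hβB hε
        have h5 : ε * B = |L| + 1 := mul_div_cancel₀ _ hε.ne'
        have h6 : -|L| ≤ L := neg_abs_le L
        have h7 : (k0:ℝ) = m + 2 * ε := by rw [hεdef]; ring
        nlinarith
  · -- negative side
    obtain ⟨k0, hk0ne, hk0m⟩ := aux_support_below θ hθ0 hθsE hM hksum hsupp
    have hk0pos : 0 < θ k0 := lt_of_le_of_ne (hθ0 k0) (Ne.symm hk0ne)
    set L := Real.log (θ k0) with hLdef
    set ε := (m - (k0:ℝ))/2 with hεdef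
    have hε : 0 < ε := by rw [hεdef]; simp only [hmdef, hTdef, hMdef] at hk0m ⊢; linarith
    set B := (|L| + 1)/ε with hBdef
    have hB : 0 < B := by positivity
    refine ⟨m - min ε (Real.log M / B), ?_, ?_⟩
    · have : 0 < min ε (Real.log M / B) := lt_min hε (by positivity)
      linarith
    · intro β hβneg hβ
      rw [div_le_iff_of_neg hβneg]
      have h1 := htan β hβ
      have h2 : β * k0 + L ≤ cgf θ β := aux_pointBound θ hθ0 β k0 hβ hk0pos
      have hmin1 : min ε (Real.log M / B) ≤ ε := min_le_left _ _
      have hmin2 : min ε (Real.log M / B) ≤ Real.log M / B := min_le_right _ _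
      have hminpos : 0 < min ε (Real.log M / B) := lt_min hε (by positivity)
      rcases le_or_gt (-B) β with hβB | hβB
      · have h3 : min ε (Real.log M / B) * (-β) ≤ (Real.log M / B) * (-β) :=
          mul_le_mul_of_nonneg_right hmin2 (by linarith)
        have h4 : (Real.log M / B) * (-β) ≤ (Real.log M / B) * B :=
          mul_le_mul_of_nonneg_left (by linarith) (by positivity)
        have h5 : (Real.log M / B) * B = Real.log M := div_mul_cancel₀ _ hB.ne'
        nlinarith
      · have h3 : min ε (Real.log M / B) * (-β) ≤ ε * (-β) :=
          mul_le_mul_of_nonneg_right hmin1 (by linarith)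
        have h4 : ε * B < ε * (-β) := mul_lt_mul_of_pos_left (by linarith) hε
        have h5 : ε * B = |L| + 1 := mul_div_cancel₀ _ hε.ne'
        have h6 : -|L| ≤ L := neg_abs_le L
        have h7 : (k0:ℝ) = m - 2 * ε := by rw [hεdef]; ring
        nlinarith


end
end

section
/- Assume the support of ϑ contains at least two points and fix r ∈ ℕ₀ and a compact set K ⊂ 𝒟_φ. Then there exists a > 0 such that lim_{n→∞} n^{r/2} sup_{β∈K} ∫_{{s ∈ ℝ : n^{1/7} ≤ |s| ≤ a√n}} |f_n(s;β)| ds = 0. -/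
open Real Filter Topology MeasureTheory Metric Set

noncomputable section

/-! ### Auxiliary lemmas -/

lemma aux_sqrt_bd {x y : ℝ} (hx : 0 < x) (hxy : y ≤ x^2) :
    Real.sqrt (x^2 - y) ≤ x - y/(2*x) := by
  have h1 : 0 ≤ x - y/(2*x) := by
    rw [sub_nonneg, div_le_iff₀ (by linarith)]
    nlinarith
  have h2 : x^2 - y ≤ (x - y/(2*x))^2 := by
    have : (x - y/(2*x))^2 = x^2 - y + (y/(2*x))^2 := by
      field_simp; ring
    nlinarith [sq_nonneg (y/(2*x))]
  calc Real.sqrt (x^2 - y) ≤ Real.sqrt ((x - y/(2*x))^2) := Real.sqrt_le_sqrt h2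
    _ = x - y/(2*x) := Real.sqrt_sq h1

lemma aux_one_sub_cos_ge {φ : ℝ} (h : |φ| ≤ 1) : φ^2/4 ≤ 1 - Real.cos φ := by
  have hb := Real.cos_bound h
  have h4 : |φ|^4 ≤ |φ|^2 := by
    nlinarith [pow_le_pow_left₀ (abs_nonneg φ) h 2, abs_nonneg φ]
  have h2 : |φ|^2 = φ^2 := sq_abs φ
  have := abs_le.1 hb
  nlinarith

lemma aux_two_pt_norm {p₁ p₂ : ℝ} (h1 : 0 < p₁) (h2 : 0 < p₂) (φ : ℝ) :
    ‖(p₁:ℂ) + Complex.exp (↑φ * Complex.I) * p₂‖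
      ≤ (p₁ + p₂) - p₁*p₂*(1 - Real.cos φ)/(p₁+p₂) := by
  have hx : 0 < p₁ + p₂ := by linarith
  have hcos : Real.cos φ ≤ 1 := Real.cos_le_one φ
  have hc0 : 0 ≤ 1 - Real.cos φ := by linarith
  have hnormsq : ‖(p₁:ℂ) + Complex.exp (↑φ * Complex.I) * p₂‖^2
      = (p₁+p₂)^2 - 2*p₁*p₂*(1 - Real.cos φ) := by
    rw [Complex.sq_norm]
    rw [Complex.exp_mul_I]
    simp [Complex.normSq_apply, Complex.add_re, Complex.add_im, Complex.cos_ofReal_re,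
      Complex.sin_ofReal_re]
    linear_combination (p₂:ℝ)^2 * Real.sin_sq_add_cos_sq φ
  have hnn : 0 ≤ ‖(p₁:ℂ) + Complex.exp (↑φ * Complex.I) * p₂‖ := norm_nonneg _
  have key : ‖(p₁:ℂ) + Complex.exp (↑φ * Complex.I) * p₂‖
      = Real.sqrt ((p₁+p₂)^2 - 2*p₁*p₂*(1 - Real.cos φ)) := by
    rw [← hnormsq, Real.sqrt_sq hnn]
  rw [key]
  have := aux_sqrt_bd (x := p₁+p₂) (y := 2*p₁*p₂*(1-Real.cos φ)) hx (by nlinarith)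
  calc Real.sqrt ((p₁+p₂)^2 - 2*p₁*p₂*(1-Real.cos φ))
      ≤ (p₁+p₂) - 2*p₁*p₂*(1-Real.cos φ)/(2*(p₁+p₂)) := this
    _ = (p₁+p₂) - p₁*p₂*(1-Real.cos φ)/(p₁+p₂) := by
        congr 1
        field_simp

lemma aux_poly_le_exp {ε : ℝ} (hε : 0 < ε) (j : ℕ) {x : ℝ} (hx : 0 ≤ x) :
    x^j ≤ ((j.factorial : ℝ) / ε^j) * Real.exp (ε*x) := by
  have h := Real.pow_div_factorial_le_exp (x := ε*x) (mul_nonneg hε.le hx) j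
  have hεj : 0 < (ε:ℝ)^j := pow_pos hε j
  rw [mul_pow, div_le_iff₀ (by positivity)] at h
  rw [div_mul_eq_mul_div, le_div_iff₀ (by positivity)]
  nlinarith [h]

lemma aux_exp_bound {b₁' b₁ b₂ b₂' : ℝ} (h1 : b₁' < b₁) (h2 : b₂ < b₂') (j : ℕ) :
    ∃ C, 0 < C ∧ ∀ β ∈ Set.Icc b₁ b₂, ∀ k : ℤ,
      |(k:ℝ)|^j * Real.exp (β*k) ≤ C * (Real.exp (b₁'*k) + Real.exp (b₂'*k)) := by
  set ε := min (b₁ - b₁') (b₂' - b₂) with hε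
  have hε0 : 0 < ε := lt_min (by linarith) (by linarith)
  refine ⟨(j.factorial : ℝ) / ε^j, by positivity, fun β hβ k => ?_⟩
  have hpoly := aux_poly_le_exp hε0 j (abs_nonneg (k:ℝ))
  have hkey : Real.exp (ε * |(k:ℝ)|) * Real.exp (β*k)
      ≤ Real.exp (b₁'*k) + Real.exp (b₂'*k) := by
    rw [← Real.exp_add]
    rcases le_or_gt 0 (k:ℝ) with hk | hk
    · rw [abs_of_nonneg hk]
      have : ε * (k:ℝ) + β * k ≤ b₂' * k := by
        have hεle : ε ≤ b₂' - b₂ := min_le_right _ _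
        nlinarith [hβ.2]
      calc Real.exp (ε*(k:ℝ) + β*k) ≤ Real.exp (b₂'*k) := Real.exp_le_exp.2 this
        _ ≤ _ := le_add_of_nonneg_left (Real.exp_pos _).le
    · rw [abs_of_neg hk]
      have : ε * (-(k:ℝ)) + β * k ≤ b₁' * k := by
        have hεle : ε ≤ b₁ - b₁' := min_le_left _ _
        nlinarith [hβ.1]
      calc Real.exp (ε*(-(k:ℝ)) + β*k) ≤ Real.exp (b₁'*k) := Real.exp_le_exp.2 this
        _ ≤ _ := le_add_of_nonneg_right (Real.exp_pos _).le
  calc |(k:ℝ)|^j * Real.exp (β*k)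
      ≤ ((j.factorial : ℝ)/ε^j) * Real.exp (ε*|(k:ℝ)|) * Real.exp (β*k) := by
        apply mul_le_mul_of_nonneg_right hpoly (Real.exp_pos _).le
    _ = ((j.factorial : ℝ)/ε^j) * (Real.exp (ε*|(k:ℝ)|) * Real.exp (β*k)) := by ring
    _ ≤ _ := by
        apply mul_le_mul_of_nonneg_left hkey (by positivity)

/-- The auxiliary sums `∑ k^j e^{βk} θ(k)`. -/
def Tj (θ : ℤ → ℝ) (j : ℕ) (β : ℝ) : ℝ := ∑' k : ℤ, (k:ℝ)^j * Real.exp (β*k) * θ k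

section Machinery

variable {θ : ℤ → ℝ} (hθ0 : ∀ k, 0 ≤ θ k)
variable {b₁' b₁ b₂ b₂' : ℝ} (hb1 : b₁' < b₁) (hbm : b₁ < b₂) (hb2 : b₂ < b₂')
variable (hs1 : Summable fun k : ℤ => Real.exp (b₁'*k) * θ k)
variable (hs2 : Summable fun k : ℤ => Real.exp (b₂'*k) * θ k)
variable {k₁ k₂ : ℤ} (hk12 : k₁ ≠ k₂) (hθk₁ : θ k₁ ≠ 0) (hθk₂ : θ k₂ ≠ 0)

include hθ0 hb1 hbm hb2 hs1 hs2

omit hθ0 hb1 hbm hb2 in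
lemma sumA : Summable (fun k : ℤ => (Real.exp (b₁'*k) + Real.exp (b₂'*k)) * θ k) := by
  simpa [add_mul] using hs1.add hs2

lemma sumTabs (j : ℕ) : ∀ β ∈ Set.Icc b₁ b₂,
    Summable (fun k : ℤ => |(k:ℝ)|^j * Real.exp (β*k) * θ k) := by
  intro β hβ
  obtain ⟨C, hC, hCb⟩ := aux_exp_bound hb1 hb2 j
  refine Summable.of_nonneg_of_le (fun k => mul_nonneg (by positivity) (hθ0 k)) (fun k => ?_)
    ((sumA hs1 hs2).mul_left C)
  have := mul_le_mul_of_nonneg_right (hCb β hβ k) (hθ0 k)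
  calc |(k:ℝ)|^j * Real.exp (β*k) * θ k ≤ C * (Real.exp (b₁'*k) + Real.exp (b₂'*k)) * θ k := this
    _ = C * ((Real.exp (b₁'*k) + Real.exp (b₂'*k)) * θ k) := by ring

lemma sumT (j : ℕ) : ∀ β ∈ Set.Icc b₁ b₂,
    Summable (fun k : ℤ => (k:ℝ)^j * Real.exp (β*k) * θ k) := by
  intro β hβ
  apply Summable.of_abs
  have := sumTabs hθ0 hb1 hbm hb2 hs1 hs2 j β hβ
  apply this.congr
  intro k
  simp [abs_mul, abs_pow, abs_of_nonneg (hθ0 k), Real.abs_exp]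

lemma derivT (j : ℕ) : ∀ β ∈ Set.Ioo b₁ b₂,
    HasDerivAt (Tj θ j) (Tj θ (j+1) β) β := by
  intro β hβ
  obtain ⟨C, hC, hCb⟩ := aux_exp_bound hb1 hb2 (j+1)
  have hmid : (b₁+b₂)/2 ∈ Set.Ioo b₁ b₂ := by constructor <;> linarith
  exact hasDerivAt_tsum_of_isPreconnected
    (u := fun k : ℤ => C * ((Real.exp (b₁'*k) + Real.exp (b₂'*k)) * θ k))
    (((sumA hs1 hs2).mul_left C)) isOpen_Ioo isPreconnected_Ioo
    (g := fun (k:ℤ) (y:ℝ) => (k:ℝ)^j * Real.exp (y*k) * θ k)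
    (g' := fun (k:ℤ) (y:ℝ) => (k:ℝ)^(j+1) * Real.exp (y*k) * θ k)
    (fun k y _ => by
      have h : HasDerivAt (fun y : ℝ => (k:ℝ)^j * Real.exp (y*k) * θ k)
          ((k:ℝ)^j * (Real.exp (y*k) * k) * θ k) y := by
        exact (((hasDerivAt_mul_const (k:ℝ)).exp).const_mul ((k:ℝ)^j)).mul_const (θ k)
      exact h.congr_deriv (by ring))
    (fun k y hy => by
      have hnorm : ‖(k:ℝ)^(j+1) * Real.exp (y*k) * θ k‖
          = |(k:ℝ)|^(j+1) * Real.exp (y*k) * θ k := by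
        simp [abs_mul, abs_pow, abs_of_nonneg (hθ0 k), Real.abs_exp]
      rw [hnorm]
      have := mul_le_mul_of_nonneg_right (hCb y (Set.mem_Icc_of_Ioo hy) k) (hθ0 k)
      calc |(k:ℝ)|^(j+1) * Real.exp (y*k) * θ k
          ≤ C * (Real.exp (b₁'*k) + Real.exp (b₂'*k)) * θ k := this
        _ = C * ((Real.exp (b₁'*k) + Real.exp (b₂'*k)) * θ k) := by ring)
    hmid
    (sumT hθ0 hb1 hbm hb2 hs1 hs2 j _ (Set.mem_Icc_of_Ioo hmid))
    hβ

include hθk₁ in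
lemma T0pos : ∀ β ∈ Set.Icc b₁ b₂, 0 < Tj θ 0 β := by
  intro β hβ
  have hsum : Summable (fun k : ℤ => (k:ℝ)^0 * Real.exp (β*k) * θ k) :=
    sumT hθ0 hb1 hbm hb2 hs1 hs2 0 β hβ
  exact Summable.tsum_pos hsum (fun k => mul_nonneg (by positivity) (hθ0 k)) k₁
    (by simpa using mul_pos (Real.exp_pos _) ((hθ0 k₁).lt_of_ne (Ne.symm hθk₁)))

include hθk₁ hθk₂ hk12 in
lemma varpos : ∀ β ∈ Set.Ioo b₁ b₂,
    0 < Tj θ 2 β * Tj θ 0 β - (Tj θ 1 β)^2 := by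
  intro β hβ
  have hβ' : β ∈ Set.Icc b₁ b₂ := Set.mem_Icc_of_Ioo hβ
  have hT0 : 0 < Tj θ 0 β := T0pos hθ0 hb1 hbm hb2 hs1 hs2 hθk₁ β hβ'
  set μ := Tj θ 1 β / Tj θ 0 β with hμ
  have hsum0 := sumT hθ0 hb1 hbm hb2 hs1 hs2 0 β hβ'
  have hsum1 := sumT hθ0 hb1 hbm hb2 hs1 hs2 1 β hβ'
  have hsum2 := sumT hθ0 hb1 hbm hb2 hs1 hs2 2 β hβ'
  have hfun : (fun k : ℤ => ((k:ℝ) - μ)^2 * (Real.exp (β*k) * θ k))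
      = fun k : ℤ => ((k:ℝ)^2 * Real.exp (β*k) * θ k - (2*μ) * ((k:ℝ)^1 * Real.exp (β*k) * θ k))
          + μ^2 * ((k:ℝ)^0 * Real.exp (β*k) * θ k) := by
    funext k; ring
  have hsumc : Summable (fun k : ℤ => ((k:ℝ) - μ)^2 * (Real.exp (β*k) * θ k)) := by
    rw [hfun]
    exact (hsum2.sub (hsum1.mul_left (2*μ))).add (hsum0.mul_left (μ^2))
  have htsum : ∑' k : ℤ, ((k:ℝ) - μ)^2 * (Real.exp (β*k) * θ k)
      = Tj θ 2 β - 2*μ*(Tj θ 1 β) + μ^2 * (Tj θ 0 β) := by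
    rw [hfun, Summable.tsum_add (hsum2.sub (hsum1.mul_left (2*μ))) (hsum0.mul_left (μ^2)),
      Summable.tsum_sub hsum2 (hsum1.mul_left (2*μ)), tsum_mul_left, tsum_mul_left]
    simp [Tj, mul_assoc]
  have hpos1 : 0 < Real.exp (β*k₁) * θ k₁ :=
    mul_pos (Real.exp_pos _) ((hθ0 k₁).lt_of_ne (Ne.symm hθk₁))
  have hpos2 : 0 < Real.exp (β*k₂) * θ k₂ :=
    mul_pos (Real.exp_pos _) ((hθ0 k₂).lt_of_ne (Ne.symm hθk₂))
  have hge : ((k₁:ℝ) - μ)^2 * (Real.exp (β*k₁) * θ k₁) + ((k₂:ℝ) - μ)^2 * (Real.exp (β*k₂) * θ k₂)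
      ≤ ∑' k : ℤ, ((k:ℝ) - μ)^2 * (Real.exp (β*k) * θ k) := by
    have := Summable.sum_le_tsum ({k₁, k₂} : Finset ℤ)
      (fun k _ => mul_nonneg (sq_nonneg _) (mul_nonneg (Real.exp_pos _).le (hθ0 k))) hsumc
    rwa [Finset.sum_pair hk12] at this
  have hd : (0:ℝ) < ((k₁:ℝ) - (k₂:ℝ))^2 := by
    have h : (k₁:ℝ) - (k₂:ℝ) ≠ 0 := by
      rw [sub_ne_zero]; exact_mod_cast hk12
    positivity
  have hterm : 0 < ((k₁:ℝ) - μ)^2 * (Real.exp (β*k₁) * θ k₁)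
      + ((k₂:ℝ) - μ)^2 * (Real.exp (β*k₂) * θ k₂) := by
    rcases eq_or_ne ((k₁:ℝ) - μ) 0 with h | h
    · have h2 : ((k₂:ℝ) - μ) ≠ 0 := by
        intro h2; apply hd.ne'; rw [sub_eq_zero] at h h2; rw [h, h2]; ring
      nlinarith [mul_pos (pow_pos (abs_pos.2 h2) 2) hpos2, sq_abs ((k₂:ℝ)-μ),
        mul_nonneg (sq_nonneg ((k₁:ℝ)-μ)) hpos1.le]
    · nlinarith [mul_pos (pow_pos (abs_pos.2 h) 2) hpos1, sq_abs ((k₁:ℝ)-μ),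
        mul_nonneg (sq_nonneg ((k₂:ℝ)-μ)) hpos2.le]
  have hvar : 0 < Tj θ 2 β - 2*μ*(Tj θ 1 β) + μ^2 * (Tj θ 0 β) := by
    rw [← htsum]; linarith
  have heq : Tj θ 2 β - 2*μ*(Tj θ 1 β) + μ^2*(Tj θ 0 β)
      = (Tj θ 2 β * Tj θ 0 β - (Tj θ 1 β)^2) / Tj θ 0 β := by
    rw [hμ]; field_simp; ring
  rw [heq] at hvar
  exact (div_pos_iff.1 hvar).resolve_right (fun h => absurd h.2 (not_lt.2 hT0.le)) |>.1

omit hθ0 hb1 hbm hb2 hs1 hs2 in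
lemma cgf_fun : cgf θ = fun β => Real.log (Tj θ 0 β) := by
  funext β; simp [cgf, Tj]

include hθk₁ in
lemma cgf_hasDeriv : ∀ y ∈ Set.Ioo b₁ b₂,
    HasDerivAt (cgf θ) (Tj θ 1 y / Tj θ 0 y) y := by
  intro y hy
  rw [cgf_fun (θ := θ)]
  exact (derivT hθ0 hb1 hbm hb2 hs1 hs2 0 y hy).log
    (T0pos hθ0 hb1 hbm hb2 hs1 hs2 hθk₁ y (Set.mem_Icc_of_Ioo hy)).ne'

include hθk₁ in
lemma ratio_hasDeriv : ∀ y ∈ Set.Ioo b₁ b₂,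
    HasDerivAt (fun y => Tj θ 1 y / Tj θ 0 y)
      ((Tj θ 2 y * Tj θ 0 y - (Tj θ 1 y)^2) / (Tj θ 0 y)^2) y := by
  intro y hy
  have h := (derivT hθ0 hb1 hbm hb2 hs1 hs2 1 y hy).div
    (derivT hθ0 hb1 hbm hb2 hs1 hs2 0 y hy)
    (T0pos hθ0 hb1 hbm hb2 hs1 hs2 hθk₁ y (Set.mem_Icc_of_Ioo hy)).ne'
  exact h.congr_deriv (by ring)

include hθk₁ in
lemma iteratedDeriv2_cgf : ∀ β ∈ Set.Ioo b₁ b₂,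
    iteratedDeriv 2 (cgf θ) β
      = (Tj θ 2 β * Tj θ 0 β - (Tj θ 1 β)^2) / (Tj θ 0 β)^2 := by
  intro β hβ
  rw [iteratedDeriv_succ, iteratedDeriv_one]
  have hEq : deriv (cgf θ) =ᶠ[nhds β] (fun y => Tj θ 1 y / Tj θ 0 y) :=
    Filter.eventuallyEq_of_mem (isOpen_Ioo.mem_nhds hβ)
      (fun y hy => (cgf_hasDeriv hθ0 hb1 hbm hb2 hs1 hs2 hθk₁ y hy).deriv)
  rw [hEq.deriv_eq]
  exact (ratio_hasDeriv hθ0 hb1 hbm hb2 hs1 hs2 hθk₁ β hβ).deriv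

lemma contT (j : ℕ) : ContinuousOn (Tj θ j) (Set.Ioo b₁ b₂) :=
  fun y hy => ((derivT hθ0 hb1 hbm hb2 hs1 hs2 j y hy).continuousAt).continuousWithinAt

end Machinery

lemma W_bound (q : ℤ → ℝ) (hq0 : ∀ k, 0 ≤ q k) (hqs : Summable q) (hq1 : ∑' k : ℤ, q k = 1)
    {k₁ k₂ : ℤ} (hk : k₁ ≠ k₂) (h1 : 0 < q k₁) (h2 : 0 < q k₂) (t : ℝ) :
    ‖∑' k : ℤ, Complex.exp (Complex.I * t * k) * (q k : ℂ)‖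
      ≤ 1 - q k₁ * q k₂ * (1 - Real.cos (t * ((k₂:ℝ) - (k₁:ℝ)))) := by
  set e : ℤ → ℂ := fun k => Complex.exp (Complex.I * t * k) * (q k : ℂ) with he_def
  have hnorm : ∀ k : ℤ, ‖e k‖ = q k := by
    intro k
    rw [he_def]
    simp only [norm_mul, Complex.norm_exp]
    simp [Complex.norm_real, abs_of_nonneg (hq0 k), Complex.mul_re, Complex.mul_im]
  have he : Summable e := by
    apply Summable.of_norm
    simpa only [hnorm] using hqs
  set F : Finset ℤ := {k₁, k₂} with hF
  have hsplit : (∑ k ∈ F, e k) + ∑' k : ↑((F:Set ℤ))ᶜ, e k = ∑' k, e k :=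
    Summable.sum_add_tsum_compl he
  have hsplitq : (∑ k ∈ F, q k) + ∑' k : ↑((F:Set ℤ))ᶜ, q k = ∑' k, q k :=
    Summable.sum_add_tsum_compl hqs
  have hpairq : ∑ k ∈ F, q k = q k₁ + q k₂ := Finset.sum_pair hk
  have hcomplq : ∑' k : ↑((F:Set ℤ))ᶜ, q k = 1 - (q k₁ + q k₂) := by
    rw [← hq1, ← hsplitq, hpairq]; ring
  have hcompl_nonneg : 0 ≤ ∑' k : ↑((F:Set ℤ))ᶜ, q k :=
    tsum_nonneg (fun k => hq0 k)
  have hle1 : q k₁ + q k₂ ≤ 1 := by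
    rw [hcomplq] at hcompl_nonneg; linarith
  have htri : ‖∑' k, e k‖ ≤ ‖∑ k ∈ F, e k‖ + ‖∑' k : ↑((F:Set ℤ))ᶜ, e k‖ := by
    rw [← hsplit]; exact norm_add_le _ _
  have hcomple : ‖∑' k : ↑((F:Set ℤ))ᶜ, e k‖ ≤ 1 - (q k₁ + q k₂) := by
    rw [← hcomplq]
    refine le_trans (norm_tsum_le_tsum_norm ?_) ?_
    · simp only [hnorm]; exact hqs.subtype _
    · exact le_of_eq (by simp only [hnorm])
  set φ := t * ((k₂:ℝ) - (k₁:ℝ)) with hφ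
  have hpair : ‖∑ k ∈ F, e k‖
      ≤ (q k₁ + q k₂) - q k₁ * q k₂ * (1 - Real.cos φ)/(q k₁ + q k₂) := by
    rw [Finset.sum_pair hk, he_def]
    have hfac : Complex.exp (Complex.I * t * k₁) * (q k₁ : ℂ)
        + Complex.exp (Complex.I * t * k₂) * (q k₂ : ℂ)
        = Complex.exp (Complex.I * t * k₁) *
          ((q k₁ : ℂ) + Complex.exp (↑φ * Complex.I) * (q k₂ : ℂ)) := by
      rw [mul_add, ← mul_assoc, ← Complex.exp_add]
      congr 2
      push_cast [hφ]
      ring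
    rw [hfac, norm_mul]
    have h1' : ‖Complex.exp (Complex.I * t * k₁)‖ = 1 := by
      rw [Complex.norm_exp]
      simp [Complex.mul_re, Complex.mul_im]
    rw [h1', one_mul]
    exact aux_two_pt_norm h1 h2 φ
  have hcos : Real.cos φ ≤ 1 := Real.cos_le_one φ
  have hdiv : q k₁ * q k₂ * (1 - Real.cos φ) ≤ q k₁ * q k₂ * (1 - Real.cos φ)/(q k₁ + q k₂) := by
    rcases eq_or_lt_of_le hle1 with h | h
    · rw [h, div_one]
    · rw [le_div_iff₀ (by linarith)]
      nlinarith [mul_nonneg (mul_nonneg (mul_nonneg h1.le h2.le)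
        (by linarith : (0:ℝ) ≤ 1 - Real.cos φ)) (by linarith : (0:ℝ) ≤ 1 - (q k₁ + q k₂))]
  calc ‖∑' k, e k‖ ≤ _ + _ := htri
    _ ≤ ((q k₁ + q k₂) - q k₁ * q k₂ * (1 - Real.cos φ)/(q k₁ + q k₂)) + (1 - (q k₁ + q k₂)) :=
        add_le_add hpair hcomple
    _ = 1 - q k₁ * q k₂ * (1 - Real.cos φ)/(q k₁ + q k₂) := by ring
    _ ≤ 1 - q k₁ * q k₂ * (1 - Real.cos φ) := by linarith

lemma inner_norm (p : ℤ → ℝ) (μ c : ℝ) (s : ℝ) :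
    ‖∑' k : ℤ, Complex.exp (Complex.I * (s:ℂ) * ((((k:ℝ) - μ) : ℝ) : ℂ) / ((c:ℝ):ℂ)) * ((p k : ℝ) : ℂ)‖
    = ‖∑' k : ℤ, Complex.exp (Complex.I * ((s/c : ℝ):ℂ) * (k:ℂ)) * ((p k:ℝ):ℂ)‖ := by
  have hterm : ∀ k : ℤ,
      Complex.exp (Complex.I * (s:ℂ) * ((((k:ℝ) - μ):ℝ):ℂ) / ((c:ℝ):ℂ)) * ((p k:ℝ):ℂ)
      = (Complex.exp (Complex.I * ((s/c:ℝ):ℂ) * (k:ℂ)) * ((p k:ℝ):ℂ))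
          * Complex.exp (-(Complex.I * ((s/c:ℝ):ℂ) * (μ:ℂ))) := by
    intro k
    have harg : Complex.I * (s:ℂ) * ((((k:ℝ) - μ):ℝ):ℂ) / ((c:ℝ):ℂ)
        = Complex.I * ((s/c:ℝ):ℂ) * (k:ℂ) + (-(Complex.I * ((s/c:ℝ):ℂ) * (μ:ℂ))) := by
      push_cast
      ring
    rw [harg, Complex.exp_add]
    ring
  rw [tsum_congr hterm, tsum_mul_right, norm_mul]
  have h1 : ‖Complex.exp (-(Complex.I * ((s/c:ℝ):ℂ) * (μ:ℂ)))‖ = 1 := by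
    have h2 : -(Complex.I * ((s/c:ℝ):ℂ) * (μ:ℂ)) = ((-(s/c*μ) : ℝ) : ℂ) * Complex.I := by
      push_cast; ring
    rw [h2, Complex.norm_exp_ofReal_mul_I]
  rw [h1, mul_one]


set_option maxHeartbeats 1600000 in
/-- there is `a > 0` such that
`lim_{n→∞} n^{r/2} sup_{β∈K} ∫_{n^{1/7} ≤ |s| ≤ a√n} |f_n(s;β)| ds = 0`,
stated as uniform convergence in `β ∈ K`. -/
theorem charFn_middle_range_integral_bound
    (θ : ℤ → ℝ) (hθ0 : ∀ k, 0 ≤ θ k) (hθs : Summable θ) (hmass : 0 < ∑' k : ℤ, θ k)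
    (hsupp : twoPointSupport θ)
    (r : ℕ) (K : Set ℝ) (hK : IsCompact K) (hKD : K ⊆ cgfDom θ) :
    ∃ a : ℝ, 0 < a ∧ ∀ ε > 0, ∃ N : ℕ, ∀ n ≥ N, ∀ β ∈ K,
      (n : ℝ) ^ ((r : ℝ) / 2) *
        ∫ s in {s : ℝ | (n : ℝ) ^ ((1 : ℝ) / 7) ≤ |s| ∧ |s| ≤ a * Real.sqrt n},
          ‖charFn θ n (s : ℂ) β‖ < ε := by
  rcases K.eq_empty_or_nonempty with rfl | hKne
  · exact ⟨1, one_pos, fun ε hε => ⟨0, fun n _ β hβ => absurd hβ (Set.notMem_empty β)⟩⟩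
  obtain ⟨k₁, k₂, hk12, hθk₁, hθk₂⟩ := hsupp
  obtain ⟨B₁, hB₁K, hB₁lb⟩ := hK.exists_isLeast hKne
  obtain ⟨B₂, hB₂K, hB₂ub⟩ := hK.exists_isGreatest hKne
  have hB₁D := hKD hB₁K
  have hB₂D := hKD hB₂K
  rw [cgfDom, mem_interior_iff_mem_nhds, Metric.mem_nhds_iff] at hB₁D hB₂D
  obtain ⟨δ₁, hδ₁, hball₁⟩ := hB₁D
  obtain ⟨δ₂, hδ₂, hball₂⟩ := hB₂D
  set b₁' := B₁ - δ₁/2 with hb₁'def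
  set b₁ := B₁ - δ₁/4 with hb₁def
  set b₂ := B₂ + δ₂/4 with hb₂def
  set b₂' := B₂ + δ₂/2 with hb₂'def
  have hs1 : Summable fun k : ℤ => Real.exp (b₁'*k) * θ k := by
    have : b₁' ∈ finiteSet θ := hball₁ (by
      rw [Metric.mem_ball, Real.dist_eq, hb₁'def]
      rw [abs_of_nonpos (by linarith)]
      linarith)
    exact this
  have hs2 : Summable fun k : ℤ => Real.exp (b₂'*k) * θ k := by
    have : b₂' ∈ finiteSet θ := hball₂ (by
      rw [Metric.mem_ball, Real.dist_eq, hb₂'def]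
      rw [abs_of_nonneg (by linarith)]
      linarith)
    exact this
  have hBle : B₁ ≤ B₂ := hB₁lb hB₂K
  have hb1 : b₁' < b₁ := by rw [hb₁'def, hb₁def]; linarith
  have hbm : b₁ < b₂ := by rw [hb₁def, hb₂def]; linarith
  have hb2 : b₂ < b₂' := by rw [hb₂def, hb₂'def]; linarith
  have hKIoo : K ⊆ Set.Ioo b₁ b₂ := fun β hβ =>
    ⟨by have := hB₁lb hβ; rw [hb₁def]; linarith, by have := hB₂ub hβ; rw [hb₂def]; linarith⟩
  have hKIcc : K ⊆ Set.Icc b₁ b₂ := hKIoo.trans Set.Ioo_subset_Icc_self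
  -- the variance function
  set V : ℝ → ℝ := fun β => (Tj θ 2 β * Tj θ 0 β - (Tj θ 1 β)^2) / (Tj θ 0 β)^2 with hVdef
  have hT0pos : ∀ β ∈ Set.Icc b₁ b₂, 0 < Tj θ 0 β := T0pos hθ0 hb1 hbm hb2 hs1 hs2 hθk₁
  have hVpos : ∀ β ∈ Set.Ioo b₁ b₂, 0 < V β := fun β hβ =>
    div_pos (varpos hθ0 hb1 hbm hb2 hs1 hs2 hk12 hθk₁ hθk₂ β hβ)
      (pow_pos (hT0pos β (Set.mem_Icc_of_Ioo hβ)) 2)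
  have hsigma_eq : ∀ β ∈ Set.Ioo b₁ b₂, sigmaT θ β = Real.sqrt (V β) := fun β hβ => by
    rw [sigmaT, iteratedDeriv2_cgf hθ0 hb1 hbm hb2 hs1 hs2 hθk₁ β hβ]
  have hVcont : ContinuousOn V (Set.Ioo b₁ b₂) := by
    apply ContinuousOn.div
    · exact ((contT hθ0 hb1 hbm hb2 hs1 hs2 2).mul (contT hθ0 hb1 hbm hb2 hs1 hs2 0)).sub
        ((contT hθ0 hb1 hbm hb2 hs1 hs2 1).pow 2)
    · exact (contT hθ0 hb1 hbm hb2 hs1 hs2 0).pow 2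
    · exact fun y hy => pow_ne_zero 2 (hT0pos y (Set.mem_Icc_of_Ioo hy)).ne'
  have hσcont : ContinuousOn (fun β => Real.sqrt (V β)) (Set.Ioo b₁ b₂) := hVcont.sqrt
  obtain ⟨βm, hβmK, hβm⟩ := hK.exists_isMinOn hKne (hσcont.mono hKIoo)
  obtain ⟨βM, hβMK, hβM⟩ := hK.exists_isMaxOn hKne (hσcont.mono hKIoo)
  set σ₀ := Real.sqrt (V βm) with hσ₀def
  set Sg := Real.sqrt (V βM) with hSgdef
  have hσ₀pos : 0 < σ₀ := Real.sqrt_pos.2 (hVpos βm (hKIoo hβmK))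
  have hSgpos : 0 < Sg := Real.sqrt_pos.2 (hVpos βM (hKIoo hβMK))
  -- the tilted probabilities at k₁, k₂
  have hcgfcont : ContinuousOn (cgf θ) (Set.Ioo b₁ b₂) := by
    rw [cgf_fun (θ := θ)]
    exact (contT hθ0 hb1 hbm hb2 hs1 hs2 0).log
      (fun y hy => (hT0pos y (Set.mem_Icc_of_Ioo hy)).ne')
  set P : ℝ → ℝ := fun β =>
    (Real.exp (β*k₁ - cgf θ β) * θ k₁) * (Real.exp (β*k₂ - cgf θ β) * θ k₂) with hPdef
  have hPcont : ContinuousOn P (Set.Ioo b₁ b₂) := by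
    have h1 : ContinuousOn (fun β : ℝ => β*(k₁:ℝ) - cgf θ β) (Set.Ioo b₁ b₂) :=
      (continuousOn_id.mul continuousOn_const).sub hcgfcont
    have h2 : ContinuousOn (fun β : ℝ => β*(k₂:ℝ) - cgf θ β) (Set.Ioo b₁ b₂) :=
      (continuousOn_id.mul continuousOn_const).sub hcgfcont
    exact ((Real.continuous_exp.comp_continuousOn h1).mul continuousOn_const).mul
      ((Real.continuous_exp.comp_continuousOn h2).mul continuousOn_const)
  obtain ⟨βp, hβpK, hβp⟩ := hK.exists_isMinOn hKne (hPcont.mono hKIoo)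
  set c₀ := P βp with hc₀def
  have hθk₁pos : 0 < θ k₁ := (hθ0 k₁).lt_of_ne (Ne.symm hθk₁)
  have hθk₂pos : 0 < θ k₂ := (hθ0 k₂).lt_of_ne (Ne.symm hθk₂)
  have hc₀pos : 0 < c₀ := mul_pos (mul_pos (Real.exp_pos _) hθk₁pos)
    (mul_pos (Real.exp_pos _) hθk₂pos)
  -- constants
  set d : ℝ := (k₂:ℝ) - (k₁:ℝ) with hddef
  have hdne : d ≠ 0 := by
    rw [hddef, sub_ne_zero]
    exact_mod_cast hk12.symm
  have hdpos : 0 < |d| := abs_pos.2 hdne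
  have hd2pos : 0 < d^2 := by positivity
  set a := σ₀ / (2*|d|) with hadef
  have hapos : 0 < a := div_pos hσ₀pos (by positivity)
  set c' := c₀ * d^2 / (4 * Sg^2) with hc'def
  have hc'pos : 0 < c' := by positivity
  have hqsum : ∀ β ∈ K, Summable (fun k : ℤ => Real.exp (β*(k:ℝ) - cgf θ β) * θ k) := by
    intro β hβ
    refine ((sumT hθ0 hb1 hbm hb2 hs1 hs2 0 β (hKIcc hβ)).mul_left
      (Real.exp (-cgf θ β))).congr (fun k => ?_)
    simp only [pow_zero, one_mul, Real.exp_sub, Real.exp_neg]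
    ring
  -- pointwise bound on the characteristic function
  have key : ∀ n : ℕ, 1 ≤ n → ∀ β ∈ K, ∀ s : ℝ, |s| ≤ a * Real.sqrt n →
      ‖charFn θ n (s:ℂ) β‖ ≤ Real.exp (-(c' * s^2)) := by
    intro n hn β hβ s hs
    have hβIoo := hKIoo hβ
    have hβIcc := hKIcc hβ
    have hσ_eq := hsigma_eq β hβIoo
    have hσl : σ₀ ≤ sigmaT θ β := by
      rw [hσ_eq, hσ₀def]; exact isMinOn_iff.1 hβm β hβ
    have hσu : sigmaT θ β ≤ Sg := by
      rw [hσ_eq, hSgdef]; exact isMaxOn_iff.1 hβM β hβ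
    have hσpos' : 0 < sigmaT θ β := lt_of_lt_of_le hσ₀pos hσl
    have hnpos : (0:ℝ) < (n:ℝ) := by exact_mod_cast hn
    have hsqrtn : 0 < Real.sqrt n := Real.sqrt_pos.2 hnpos
    set q : ℤ → ℝ := fun k => Real.exp (β*k - cgf θ β) * θ k with hqdef
    have hqe : ∀ k : ℤ, q k = Real.exp (-cgf θ β) * ((k:ℝ)^0 * Real.exp (β*k) * θ k) := by
      intro k
      rw [hqdef]
      simp only [pow_zero, one_mul, Real.exp_sub, Real.exp_neg]
      ring
    have hqs : Summable q :=
      ((sumT hθ0 hb1 hbm hb2 hs1 hs2 0 β hβIcc).mul_left (Real.exp (-cgf θ β))).congr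
        (fun k => (hqe k).symm)
    have hq0 : ∀ k, 0 ≤ q k := fun k => mul_nonneg (Real.exp_pos _).le (hθ0 k)
    have hT0β := hT0pos β hβIcc
    have hcgfβ : cgf θ β = Real.log (Tj θ 0 β) := by rw [cgf_fun (θ := θ)]
    have hq1 : ∑' k, q k = 1 := by
      calc ∑' k, q k = Real.exp (-cgf θ β) * Tj θ 0 β := by
            rw [tsum_congr hqe, tsum_mul_left]; rfl
        _ = 1 := by
            rw [hcgfβ, Real.exp_neg, Real.exp_log hT0β]
            field_simp
    have hq₁pos : 0 < q k₁ := mul_pos (Real.exp_pos _) hθk₁pos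
    have hq₂pos : 0 < q k₂ := mul_pos (Real.exp_pos _) hθk₂pos
    have hc₀le : c₀ ≤ q k₁ * q k₂ := isMinOn_iff.1 hβp β hβ
    set t := s / (sigmaT θ β * Real.sqrt n) with htdef
    have hnorm_eq : ‖charFn θ n (s:ℂ) β‖
        = ‖∑' k : ℤ, Complex.exp (Complex.I * (t:ℂ) * (k:ℂ)) * ((q k :ℝ):ℂ)‖ ^ n := by
      rw [charFn, norm_pow]
      congr 1
      exact inner_norm (fun k => Real.exp (β*k - cgf θ β) * θ k) (muT θ β)
        (sigmaT θ β * Real.sqrt n) s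
    have hW := W_bound q hq0 hqs hq1 hk12 hq₁pos hq₂pos t
    -- |t*d| ≤ 1
    have htabs : |t| ≤ a / σ₀ := by
      rw [htdef, abs_div, abs_of_pos (mul_pos hσpos' hsqrtn)]
      calc |s| / (sigmaT θ β * Real.sqrt n) ≤ (a * Real.sqrt n) / (sigmaT θ β * Real.sqrt n) := by
            gcongr
        _ = a / sigmaT θ β := by
            rw [mul_comm a (Real.sqrt n), mul_comm (sigmaT θ β) (Real.sqrt n),
              mul_div_mul_left _ _ hsqrtn.ne']
        _ ≤ a / σ₀ := by gcongr
    have htd : |t * d| ≤ 1 := by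
      rw [abs_mul]
      have h1 : |t| * |d| ≤ (a/σ₀) * |d| := mul_le_mul_of_nonneg_right htabs (abs_nonneg d)
      have heq : (a/σ₀)*|d| = 1/2 := by
        rw [hadef]
        field_simp
      linarith
    have hcos4 := aux_one_sub_cos_ge htd
    rw [← hddef] at hW
    set x := q k₁ * q k₂ * (1 - Real.cos (t*d)) with hxdef
    have hqle : ‖∑' k : ℤ, Complex.exp (Complex.I * (t:ℂ) * (k:ℂ)) * ((q k :ℝ):ℂ)‖
        ≤ Real.exp (-x) := by
      refine hW.trans ?_
      linarith [Real.add_one_le_exp (-x)]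
    have hx1 : c₀*((t*d)^2/4) ≤ x := by
      rw [hxdef]
      exact mul_le_mul hc₀le hcos4 (by positivity) (mul_nonneg hq₁pos.le hq₂pos.le)
    have ht2 : (n:ℝ)*t^2 = s^2/(sigmaT θ β)^2 := by
      rw [htdef, div_pow, mul_pow, Real.sq_sqrt hnpos.le]
      field_simp
    have hσ2 : (sigmaT θ β)^2 ≤ Sg^2 := pow_le_pow_left₀ hσpos'.le hσu 2
    have hfrac : s^2/Sg^2 ≤ s^2/(sigmaT θ β)^2 := by gcongr <;> positivity
    have h5 : c' * s^2 ≤ (n:ℝ) * (c₀*((t*d)^2/4)) := by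
      calc c' * s^2 = (c₀*d^2/4) * (s^2/Sg^2) := by rw [hc'def]; ring
        _ ≤ (c₀*d^2/4) * (s^2/(sigmaT θ β)^2) := mul_le_mul_of_nonneg_left hfrac (by positivity)
        _ = (n:ℝ)*(c₀*((t*d)^2/4)) := by rw [← ht2]; ring
    have h6 : (n:ℝ)*(c₀*((t*d)^2/4)) ≤ (n:ℝ)*x := mul_le_mul_of_nonneg_left hx1 hnpos.le
    calc ‖charFn θ n (s:ℂ) β‖
        = ‖∑' k : ℤ, Complex.exp (Complex.I * (t:ℂ) * (k:ℂ)) * ((q k :ℝ):ℂ)‖ ^ n := hnorm_eq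
      _ ≤ Real.exp (-x) ^ n := pow_le_pow_left₀ (norm_nonneg _) hqle n
      _ = Real.exp ((n:ℝ) * (-x)) := (Real.exp_nat_mul _ n).symm
      _ ≤ Real.exp (-(c' * s^2)) := Real.exp_le_exp.2 (by linarith)
  -- Gaussian integral facts
  have hgauss_int : MeasureTheory.Integrable (fun s : ℝ => Real.exp (-(c'/2) * s^2)) :=
    integrable_exp_neg_mul_sq (by positivity : (0:ℝ) < c'/2)
  set D := Real.sqrt (π/(c'/2)) with hDdef
  have hgauss_val : ∫ s : ℝ, Real.exp (-(c'/2) * s^2) = D := integral_gaussian (c'/2)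
  set bound : ℕ → ℝ :=
    fun n => (n:ℝ)^((r:ℝ)/2) * (Real.exp (-(c'/2) * ((n:ℝ)^((2:ℝ)/7))) * D) with hbdef
  have hb_tendsto : Filter.Tendsto bound Filter.atTop (𝓝 0) := by
    have h27 : Filter.Tendsto (fun n : ℕ => ((n:ℝ))^((2:ℝ)/7)) Filter.atTop Filter.atTop :=
      (tendsto_rpow_atTop (by norm_num)).comp tendsto_natCast_atTop_atTop
    have hmain := (tendsto_rpow_mul_exp_neg_mul_atTop_nhds_zero ((7:ℝ)*(r:ℝ)/4) (c'/2)
      (by positivity)).comp h27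
    have hmul := hmain.mul_const D
    rw [zero_mul] at hmul
    refine Filter.Tendsto.congr (fun n => ?_) hmul
    simp only [Function.comp_apply]
    rw [hbdef]
    have h1 : ((n:ℝ)^((2:ℝ)/7))^((7:ℝ)*(r:ℝ)/4) = (n:ℝ)^((r:ℝ)/2) := by
      rw [← Real.rpow_mul (Nat.cast_nonneg n)]
      congr 1
      ring
    rw [h1]
    ring
  refine ⟨a, hapos, ?_⟩
  intro ε hε
  have hev1 : ∀ᶠ n : ℕ in Filter.atTop, bound n < ε := hb_tendsto.eventually_lt_const hε
  obtain ⟨N₀, hN₀⟩ := Filter.eventually_atTop.1 hev1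
  refine ⟨max N₀ 1, fun n hn β hβ => ?_⟩
  have hn1 : 1 ≤ n := le_trans (le_max_right _ _) hn
  have hnN₀ : N₀ ≤ n := le_trans (le_max_left _ _) hn
  set A := (n:ℝ)^((1:ℝ)/7) with hAdef
  have hA0 : 0 ≤ A := Real.rpow_nonneg (Nat.cast_nonneg n) _
  set S := {s : ℝ | A ≤ |s| ∧ |s| ≤ a * Real.sqrt n} with hSdef
  have hSmeas : MeasurableSet S := by
    have hSeq : S = {s : ℝ | A ≤ |s|} ∩ {s : ℝ | |s| ≤ a * Real.sqrt n} := rfl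
    rw [hSeq]
    exact ((isClosed_le continuous_const continuous_abs).measurableSet).inter
      ((isClosed_le continuous_abs continuous_const).measurableSet)
  have hbound : ∀ s ∈ S, ‖charFn θ n (s:ℂ) β‖
      ≤ Real.exp (-(c'/2)*A^2) * Real.exp (-(c'/2)*s^2) := by
    intro s hs
    have h1 := key n hn1 β hβ s hs.2
    have h2 : A^2 ≤ s^2 := by
      calc A^2 ≤ |s|^2 := pow_le_pow_left₀ hA0 hs.1 2
        _ = s^2 := sq_abs s
    refine h1.trans ?_
    rw [← Real.exp_add]
    apply Real.exp_le_exp.2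
    have h3 : 0 ≤ c'*s^2 - c'*A^2 := by
      rw [← mul_sub]
      exact mul_nonneg hc'pos.le (sub_nonneg.2 h2)
    linarith
  have hF : Continuous (fun s : ℝ => ∑' k : ℤ,
      Complex.exp (Complex.I * (s:ℂ) * ((((k:ℝ) - muT θ β):ℝ):ℂ) /
        ((sigmaT θ β * Real.sqrt n : ℝ):ℂ)) *
      ((Real.exp (β*(k:ℝ) - cgf θ β) * θ k : ℝ):ℂ)) := by
    apply continuous_tsum ?_ (hqsum β hβ) ?_
    · intro k
      apply Continuous.mul ?_ continuous_const
      have hc1 : Continuous (fun s : ℝ => Complex.exp ((s:ℂ) *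
          (Complex.I * ((((k:ℝ) - muT θ β):ℝ):ℂ) / ((sigmaT θ β * Real.sqrt n : ℝ):ℂ)))) :=
        (Complex.continuous_ofReal.mul continuous_const).cexp
      refine hc1.congr (fun s => ?_)
      congr 1
      ring
    · intro k s
      rw [norm_mul]
      have hc2 : Complex.I * (s:ℂ) * ((((k:ℝ) - muT θ β):ℝ):ℂ) /
          ((sigmaT θ β * Real.sqrt n : ℝ):ℂ)
          = ((s * ((k:ℝ) - muT θ β) / (sigmaT θ β * Real.sqrt n) : ℝ):ℂ) * Complex.I := by
        push_cast
        ring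
      rw [hc2, Complex.norm_exp_ofReal_mul_I, one_mul,
        Complex.norm_real, Real.norm_eq_abs,
        abs_of_nonneg (mul_nonneg (Real.exp_pos _).le (hθ0 k))]
  have hcharfun : (fun s : ℝ => ‖charFn θ n (s:ℂ) β‖)
      = fun s : ℝ => ‖(∑' k : ℤ,
      Complex.exp (Complex.I * (s:ℂ) * ((((k:ℝ) - muT θ β):ℝ):ℂ) /
        ((sigmaT θ β * Real.sqrt n : ℝ):ℂ)) *
      ((Real.exp (β*(k:ℝ) - cgf θ β) * θ k : ℝ):ℂ))^n‖ := rfl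
  have hcont : Continuous (fun s : ℝ => ‖charFn θ n (s:ℂ) β‖) := by
    rw [hcharfun]
    exact (hF.pow n).norm
  have hg_int : MeasureTheory.Integrable
      (fun s : ℝ => Real.exp (-(c'/2)*A^2) * Real.exp (-(c'/2)*s^2)) :=
    hgauss_int.const_mul _
  have hf_int : MeasureTheory.IntegrableOn (fun s : ℝ => ‖charFn θ n (s:ℂ) β‖) S := by
    refine MeasureTheory.Integrable.mono' hg_int.integrableOn
      hcont.aestronglyMeasurable.restrict ?_
    refine (MeasureTheory.ae_restrict_iff' hSmeas).2 (Filter.Eventually.of_forall fun s hs => ?_)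
    rw [norm_norm]
    exact hbound s hs
  have hIle : ∫ s in S, ‖charFn θ n (s:ℂ) β‖ ≤ Real.exp (-(c'/2)*A^2) * D := by
    calc ∫ s in S, ‖charFn θ n (s:ℂ) β‖
        ≤ ∫ s in S, Real.exp (-(c'/2)*A^2) * Real.exp (-(c'/2)*s^2) :=
          MeasureTheory.setIntegral_mono_on hf_int hg_int.integrableOn hSmeas hbound
      _ = Real.exp (-(c'/2)*A^2) * ∫ s in S, Real.exp (-(c'/2)*s^2) :=
          MeasureTheory.integral_const_mul _ _
      _ ≤ Real.exp (-(c'/2)*A^2) * D := by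
          apply mul_le_mul_of_nonneg_left ?_ (Real.exp_pos _).le
          calc ∫ s in S, Real.exp (-(c'/2)*s^2)
              ≤ ∫ s : ℝ, Real.exp (-(c'/2)*s^2) :=
              MeasureTheory.setIntegral_le_integral hgauss_int
                (Filter.Eventually.of_forall fun s => (Real.exp_pos _).le)
            _ = D := hgauss_val
  have hA2 : A^2 = (n:ℝ)^((2:ℝ)/7) := by
    rw [hAdef, ← Real.rpow_natCast ((n:ℝ)^((1:ℝ)/7)) 2, ← Real.rpow_mul (Nat.cast_nonneg n)]
    norm_num
  have hfinal : (n:ℝ)^((r:ℝ)/2) * ∫ s in S, ‖charFn θ n (s:ℂ) β‖ ≤ bound n := by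
    calc (n:ℝ)^((r:ℝ)/2) * ∫ s in S, ‖charFn θ n (s:ℂ) β‖
        ≤ (n:ℝ)^((r:ℝ)/2) * (Real.exp (-(c'/2)*A^2) * D) :=
          mul_le_mul_of_nonneg_left hIle (Real.rpow_nonneg (Nat.cast_nonneg n) _)
      _ = bound n := by rw [hbdef, hA2]
  exact lt_of_le_of_lt hfinal (hN₀ n hnN₀)

end
end

section
/- Assume 0 ∈ 𝒟_φ and set m = ϑ(ℤ). Then for every C > 0, lim_{n→∞} n^C m^{−n} ∑_{k ∈ ℤ, |k − nφ'(0)| ≥ n^{3/4}} ϑ^{*n}({k}) = 0. -/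
open Real Filter Topology MeasureTheory Metric Set

noncomputable section

def Gconv (θ : ℤ → ℝ) : ℕ → ℤ → ENNReal
  | 0, k => if k = 0 then 1 else 0
  | n + 1, k => ∑' j : ℤ, Gconv θ n j * ENNReal.ofReal (θ (k - j))

lemma exp_taylor2 (x : ℝ) : |Real.exp x - 1 - x| ≤ x ^ 2 * Real.exp |x| := by
  have h0 : 0 ≤ Real.exp x - 1 - x := by have := Real.add_one_le_exp x; linarith
  rw [abs_of_nonneg h0]
  rcases le_or_gt (|x|) 1 with h | h
  · have := Real.abs_exp_sub_one_sub_id_le h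
    have h1 : (1:ℝ) ≤ Real.exp |x| := Real.one_le_exp (abs_nonneg x)
    nlinarith [sq_nonneg x, abs_of_nonneg h0]
  · have hx2 : (1:ℝ) ≤ x ^ 2 := by nlinarith [abs_nonneg x, sq_abs x]
    rcases le_or_gt 0 x with hx | hx
    · have hax : |x| = x := abs_of_nonneg hx
      have h1 : Real.exp x - 1 - x ≤ Real.exp x := by linarith
      calc Real.exp x - 1 - x ≤ Real.exp x := h1
        _ = 1 * Real.exp |x| := by rw [hax]; ring
        _ ≤ x ^ 2 * Real.exp |x| := by
            have := Real.exp_nonneg |x|; nlinarith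
    · have h1 : Real.exp x ≤ 1 := Real.exp_le_one_iff.mpr hx.le
      have h2 : Real.exp x - 1 - x ≤ -x := by linarith
      have h3 : -x ≤ x ^ 2 := by nlinarith [abs_of_neg hx]
      have h4 : (1:ℝ) ≤ Real.exp |x| := Real.one_le_exp (abs_nonneg x)
      nlinarith [sq_nonneg x]

lemma Gconv_tsum (θ : ℤ → ℝ) (β : ℝ) :
    ∀ n : ℕ, ∑' k : ℤ, ENNReal.ofReal (Real.exp (β * k)) * Gconv θ n k
      = (∑' k : ℤ, ENNReal.ofReal (Real.exp (β * k)) * ENNReal.ofReal (θ k)) ^ n := by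
  intro n
  induction n with
  | zero =>
      rw [pow_zero]
      rw [tsum_eq_single (0 : ℤ)]
      · simp [Gconv]
      · intro k hk; simp [Gconv, hk]
  | succ n ih =>
      have key : ∀ k : ℤ, ENNReal.ofReal (Real.exp (β * k)) * Gconv θ (n+1) k
          = ∑' j : ℤ, (ENNReal.ofReal (Real.exp (β * j)) * Gconv θ n j) *
              (ENNReal.ofReal (Real.exp (β * (k - j))) * ENNReal.ofReal (θ (k - j))) := by
        intro k
        show ENNReal.ofReal (Real.exp (β * k)) * (∑' j : ℤ, Gconv θ n j * ENNReal.ofReal (θ (k - j))) = _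
        rw [← ENNReal.tsum_mul_left]
        refine tsum_congr fun j => ?_
        have hexp : Real.exp (β * k) = Real.exp (β * j) * Real.exp (β * (k - j)) := by
          rw [← Real.exp_add]; push_cast; ring_nf
        rw [hexp, ENNReal.ofReal_mul (Real.exp_nonneg _)]
        ring
      calc ∑' k : ℤ, ENNReal.ofReal (Real.exp (β * k)) * Gconv θ (n+1) k
          = ∑' k : ℤ, ∑' j : ℤ, (ENNReal.ofReal (Real.exp (β * j)) * Gconv θ n j) *
              (ENNReal.ofReal (Real.exp (β * (k - j))) * ENNReal.ofReal (θ (k - j))) := by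
            exact tsum_congr key
        _ = ∑' j : ℤ, ∑' k : ℤ, (ENNReal.ofReal (Real.exp (β * j)) * Gconv θ n j) *
              (ENNReal.ofReal (Real.exp (β * (k - j))) * ENNReal.ofReal (θ (k - j))) :=
            ENNReal.tsum_comm
        _ = ∑' j : ℤ, (ENNReal.ofReal (Real.exp (β * j)) * Gconv θ n j) *
              ∑' k : ℤ, (ENNReal.ofReal (Real.exp (β * (k - j))) * ENNReal.ofReal (θ (k - j))) := by
            refine tsum_congr fun j => ENNReal.tsum_mul_left
        _ = ∑' j : ℤ, (ENNReal.ofReal (Real.exp (β * j)) * Gconv θ n j) *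
              ∑' k : ℤ, (ENNReal.ofReal (Real.exp (β * k)) * ENNReal.ofReal (θ k)) := by
            refine tsum_congr fun j => ?_
            congr 1
            have h := Equiv.tsum_eq (Equiv.subRight j)
              (fun k : ℤ => ENNReal.ofReal (Real.exp (β * k)) * ENNReal.ofReal (θ k))
            simpa [Equiv.subRight_apply, Int.cast_sub] using h
        _ = (∑' k : ℤ, ENNReal.ofReal (Real.exp (β * k)) * ENNReal.ofReal (θ k)) ^ (n+1) := by
            rw [ENNReal.tsum_mul_right, ih, pow_succ, mul_comm]

lemma Gconv_total (θ : ℤ → ℝ) (n : ℕ) :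
    ∑' k : ℤ, Gconv θ n k = (∑' k : ℤ, ENNReal.ofReal (θ k)) ^ n := by
  have := Gconv_tsum θ 0 n
  simpa using this

lemma Gconv_ne_top (θ : ℤ → ℝ) (hθ0 : ∀ k, 0 ≤ θ k) (hθs : Summable θ) (n : ℕ) (k : ℤ) :
    Gconv θ n k ≠ ⊤ := by
  have htot : ∑' k : ℤ, Gconv θ n k ≠ ⊤ := by
    rw [Gconv_total, ← ENNReal.ofReal_tsum_of_nonneg hθ0 hθs]
    exact ENNReal.pow_ne_top ENNReal.ofReal_ne_top
  exact ne_top_of_le_ne_top htot (ENNReal.le_tsum k)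

lemma convPow_nonneg (θ : ℤ → ℝ) (hθ0 : ∀ k, 0 ≤ θ k) : ∀ n k, 0 ≤ convPow θ n k := by
  intro n
  induction n with
  | zero => intro k; simp only [convPow]; split <;> norm_num
  | succ n ih => intro k; exact tsum_nonneg fun j => mul_nonneg (ih j) (hθ0 _)

lemma convPow_eq (θ : ℤ → ℝ) (hθ0 : ∀ k, 0 ≤ θ k) (hθs : Summable θ) :
    ∀ n k, ENNReal.ofReal (convPow θ n k) = Gconv θ n k := by
  intro n
  induction n with
  | zero => intro k; simp only [convPow, Gconv]; split <;> simp
  | succ n ih =>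
      intro k
      have hG : Gconv θ (n+1) k = ∑' j : ℤ, ENNReal.ofReal (convPow θ n j * θ (k - j)) := by
        show (∑' j : ℤ, Gconv θ n j * ENNReal.ofReal (θ (k - j))) = _
        refine tsum_congr fun j => ?_
        rw [← ih j, ← ENNReal.ofReal_mul (convPow_nonneg θ hθ0 n j)]
      have hfin : Gconv θ (n+1) k ≠ ⊤ := Gconv_ne_top θ hθ0 hθs (n+1) k
      have hreal : convPow θ (n+1) k = (Gconv θ (n+1) k).toReal := by
        rw [hG, ENNReal.tsum_toReal_eq fun j => ENNReal.ofReal_ne_top]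
        show (∑' j : ℤ, convPow θ n j * θ (k - j)) = _
        refine tsum_congr fun j => ?_
        rw [ENNReal.toReal_ofReal (mul_nonneg (convPow_nonneg θ hθ0 n j) (hθ0 _))]
      rw [hreal, ENNReal.ofReal_toReal hfin]

lemma tsum_exp_ofReal (θ : ℤ → ℝ) (hθ0 : ∀ k, 0 ≤ θ k) (b : ℝ)
    (hs : Summable fun k : ℤ => Real.exp (b * k) * θ k) :
    ∑' k : ℤ, ENNReal.ofReal (Real.exp (b * k)) * ENNReal.ofReal (θ k)
      = ENNReal.ofReal (∑' k : ℤ, Real.exp (b * k) * θ k) := by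
  rw [ENNReal.ofReal_tsum_of_nonneg (fun k => mul_nonneg (Real.exp_nonneg _) (hθ0 k)) hs]
  exact tsum_congr fun k => (ENNReal.ofReal_mul (Real.exp_nonneg _)).symm

set_option maxHeartbeats 1000000 in
lemma tail_bound (θ : ℤ → ℝ) (hθ0 : ∀ k, 0 ≤ θ k) (hθs : Summable θ)
    (β t μ : ℝ) (hβ : 0 ≤ β) (n : ℕ)
    (hsp : Summable fun k : ℤ => Real.exp (β * k) * θ k)
    (hsn : Summable fun k : ℤ => Real.exp (-β * k) * θ k) :
    ∑' k : {k : ℤ | t ≤ |(k : ℝ) - n * μ|}, convPow θ n k ≤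
      Real.exp (-β * (n * μ + t)) * (∑' k : ℤ, Real.exp (β * k) * θ k) ^ n
      + Real.exp (β * (n * μ - t)) * (∑' k : ℤ, Real.exp (-β * k) * θ k) ^ n := by
  set S : Set ℤ := {k : ℤ | t ≤ |(k : ℝ) - n * μ|} with hS
  set Ap : ℝ := ∑' k : ℤ, Real.exp (β * k) * θ k with hAp
  set An : ℝ := ∑' k : ℤ, Real.exp (-β * k) * θ k with hAn
  have hApnn : 0 ≤ Ap := tsum_nonneg fun k => mul_nonneg (Real.exp_nonneg _) (hθ0 k)
  have hAnnn : 0 ≤ An := tsum_nonneg fun k => mul_nonneg (Real.exp_nonneg _) (hθ0 k)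
  -- the two dominating functions
  set F1 : ℤ → ENNReal := fun k =>
    ENNReal.ofReal (Real.exp (β * ((k : ℝ) - n * μ - t))) * Gconv θ n k with hF1
  set F2 : ℤ → ENNReal := fun k =>
    ENNReal.ofReal (Real.exp (-β * ((k : ℝ) - n * μ + t))) * Gconv θ n k with hF2
  have key : ∀ k ∈ S, Gconv θ n k ≤ F1 k + F2 k := by
    intro k hk
    rcases abs_cases ((k : ℝ) - n * μ) with ⟨habs, _⟩ | ⟨habs, _⟩
    · refine le_add_right ?_
      have h1 : (1 : ENNReal) ≤ ENNReal.ofReal (Real.exp (β * ((k : ℝ) - n * μ - t))) := by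
        rw [ENNReal.one_le_ofReal]
        exact Real.one_le_exp (mul_nonneg hβ (by rw [hS] at hk; simp only [mem_setOf_eq] at hk; linarith [habs ▸ hk]))
      calc Gconv θ n k = 1 * Gconv θ n k := (one_mul _).symm
        _ ≤ _ := mul_le_mul_left h1 _
    · refine le_add_left ?_
      have h1 : (1 : ENNReal) ≤ ENNReal.ofReal (Real.exp (-β * ((k : ℝ) - n * μ + t))) := by
        rw [ENNReal.one_le_ofReal]
        refine Real.one_le_exp ?_
        have hk' : t ≤ -((k : ℝ) - n * μ) := by rw [hS] at hk; simp only [mem_setOf_eq] at hk; linarith [habs ▸ hk]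
        nlinarith
      calc Gconv θ n k = 1 * Gconv θ n k := (one_mul _).symm
        _ ≤ _ := mul_le_mul_left h1 _
  have hsum1 : ∑' k : ℤ, F1 k = ENNReal.ofReal (Real.exp (-β * (n * μ + t))) *
      (∑' k : ℤ, ENNReal.ofReal (Real.exp (β * k)) * ENNReal.ofReal (θ k)) ^ n := by
    have step : ∀ k : ℤ, F1 k = ENNReal.ofReal (Real.exp (-β * (n * μ + t))) *
        (ENNReal.ofReal (Real.exp (β * k)) * Gconv θ n k) := by
      intro k
      show ENNReal.ofReal (Real.exp (β * ((k : ℝ) - n * μ - t))) * Gconv θ n k = _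
      rw [show β * ((k : ℝ) - n * μ - t) = -β * (n * μ + t) + β * k by ring,
        Real.exp_add, ENNReal.ofReal_mul (Real.exp_nonneg _), mul_assoc]
    rw [tsum_congr step, ENNReal.tsum_mul_left, Gconv_tsum θ β n]
  have hsum2 : ∑' k : ℤ, F2 k = ENNReal.ofReal (Real.exp (β * (n * μ - t))) *
      (∑' k : ℤ, ENNReal.ofReal (Real.exp (-β * k)) * ENNReal.ofReal (θ k)) ^ n := by
    have step : ∀ k : ℤ, F2 k = ENNReal.ofReal (Real.exp (β * (n * μ - t))) *
        (ENNReal.ofReal (Real.exp (-β * k)) * Gconv θ n k) := by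
      intro k
      show ENNReal.ofReal (Real.exp (-β * ((k : ℝ) - n * μ + t))) * Gconv θ n k = _
      rw [show -β * ((k : ℝ) - n * μ + t) = β * (n * μ - t) + -β * k by ring,
        Real.exp_add, ENNReal.ofReal_mul (Real.exp_nonneg _), mul_assoc]
    rw [tsum_congr step, ENNReal.tsum_mul_left, Gconv_tsum θ (-β) n]
  have hAppos := tsum_exp_ofReal θ hθ0 β hsp
  have hAnpos := tsum_exp_ofReal θ hθ0 (-β) hsn
  -- RHS in ENNReal
  set R : ENNReal := ENNReal.ofReal (Real.exp (-β * (n * μ + t))) * (ENNReal.ofReal Ap) ^ n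
      + ENNReal.ofReal (Real.exp (β * (n * μ - t))) * (ENNReal.ofReal An) ^ n with hR
  have hRne : R ≠ ⊤ := by
    rw [hR]
    refine ENNReal.add_ne_top.2 ⟨?_, ?_⟩ <;>
      exact ENNReal.mul_ne_top ENNReal.ofReal_ne_top (ENNReal.pow_ne_top ENNReal.ofReal_ne_top)
  have hEle : ∑' k : S, Gconv θ n k ≤ R := by
    calc ∑' k : S, Gconv θ n (k : ℤ) = ∑' k : ℤ, S.indicator (Gconv θ n) k := tsum_subtype S _
      _ ≤ ∑' k : ℤ, (F1 k + F2 k) := by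
          refine ENNReal.tsum_le_tsum fun k => ?_
          by_cases hk : k ∈ S
          · rw [Set.indicator_of_mem hk]; exact key k hk
          · rw [Set.indicator_of_notMem hk]; exact zero_le
      _ = ∑' k : ℤ, F1 k + ∑' k : ℤ, F2 k := ENNReal.tsum_add
      _ = R := by rw [hsum1, hsum2, hAppos, hAnpos, ← hAp, ← hAn, hR]
  have hGne : ∀ k : S, Gconv θ n (k : ℤ) ≠ ⊤ := fun k => Gconv_ne_top θ hθ0 hθs n k
  have hTreal : ∑' k : S, convPow θ n (k : ℤ) = (∑' k : S, Gconv θ n (k : ℤ)).toReal := by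
    rw [ENNReal.tsum_toReal_eq hGne]
    refine tsum_congr fun k => ?_
    rw [← convPow_eq θ hθ0 hθs n (k : ℤ),
      ENNReal.toReal_ofReal (convPow_nonneg θ hθ0 n (k : ℤ))]
  have hRtoReal : R.toReal = Real.exp (-β * (n * μ + t)) * Ap ^ n
      + Real.exp (β * (n * μ - t)) * An ^ n := by
    rw [hR, ENNReal.toReal_add (ENNReal.mul_ne_top ENNReal.ofReal_ne_top (ENNReal.pow_ne_top ENNReal.ofReal_ne_top))
      (ENNReal.mul_ne_top ENNReal.ofReal_ne_top (ENNReal.pow_ne_top ENNReal.ofReal_ne_top)),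
      ENNReal.toReal_mul, ENNReal.toReal_mul, ENNReal.toReal_pow, ENNReal.toReal_pow,
      ENNReal.toReal_ofReal (Real.exp_nonneg _), ENNReal.toReal_ofReal (Real.exp_nonneg _),
      ENNReal.toReal_ofReal hApnn, ENNReal.toReal_ofReal hAnnn]
  rw [hTreal, ← hRtoReal]
  exact ENNReal.toReal_mono hRne hEle

section Analysis

variable {θ : ℤ → ℝ} {ε : ℝ}

lemma sum_exp_abs (hθ0 : ∀ k, 0 ≤ θ k)
    (hp : Summable fun k : ℤ => Real.exp (ε * k) * θ k)
    (hn : Summable fun k : ℤ => Real.exp (-ε * k) * θ k) :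
    Summable fun k : ℤ => Real.exp (ε * |(k : ℝ)|) * θ k := by
  refine Summable.of_nonneg_of_le (fun k => mul_nonneg (Real.exp_nonneg _) (hθ0 k))
    (fun k => ?_) (hp.add hn)
  rcases abs_cases ((k : ℝ)) with ⟨h, _⟩ | ⟨h, _⟩
  · rw [h]
    have := Real.exp_nonneg (-ε * (k : ℝ))
    nlinarith [hθ0 k, Real.exp_nonneg (ε * (k : ℝ))]
  · rw [h, show ε * -(k:ℝ) = -ε * k by ring]
    nlinarith [hθ0 k, Real.exp_nonneg (ε * (k : ℝ)), Real.exp_nonneg (-ε * (k : ℝ))]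

lemma sum_sq_exp (hε : 0 < ε) (hθ0 : ∀ k, 0 ≤ θ k)
    (hp : Summable fun k : ℤ => Real.exp (ε * k) * θ k)
    (hn : Summable fun k : ℤ => Real.exp (-ε * k) * θ k) :
    Summable fun k : ℤ => (k : ℝ) ^ 2 * Real.exp ((ε/2) * |(k : ℝ)|) * θ k := by
  have hbase := (sum_exp_abs hθ0 hp hn).mul_left (16 / ε ^ 2)
  refine Summable.of_nonneg_of_le
    (fun k => mul_nonneg (mul_nonneg (sq_nonneg _) (Real.exp_nonneg _)) (hθ0 k))
    (fun k => ?_) hbase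
  have hkey : (k : ℝ) ^ 2 * Real.exp ((ε/2) * |(k : ℝ)|) ≤ 16 / ε ^ 2 * Real.exp (ε * |(k : ℝ)|) := by
    set y : ℝ := (ε/2) * |(k : ℝ)| with hy
    have hy0 : 0 ≤ y := mul_nonneg (by linarith) (abs_nonneg _)
    have h1 : y ^ 2 / 4 ≤ Real.exp y := by
      have h2 : 1 + y/2 ≤ Real.exp (y/2) := by linarith [Real.add_one_le_exp (y/2)]
      have h3 : Real.exp (y/2) ^ 2 = Real.exp y := by
        rw [sq, ← Real.exp_add]; ring_nf
      nlinarith [Real.exp_nonneg (y/2)]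
    have hk2 : (k : ℝ) ^ 2 = 4 / ε ^ 2 * y ^ 2 := by
      rw [hy]
      rw [mul_pow, sq_abs]
      field_simp
      ring
    have h2y : Real.exp (ε * |(k : ℝ)|) = Real.exp y * Real.exp y := by
      rw [← Real.exp_add, hy]; ring_nf
    rw [hk2, h2y]
    have hε2 : (0:ℝ) < ε ^ 2 := by positivity
    have hey := Real.exp_nonneg y
    have h5 : y ^ 2 * Real.exp y ≤ 4 * (Real.exp y * Real.exp y) := by nlinarith
    have hpos : (0:ℝ) ≤ 4 / ε ^ 2 := by positivity
    calc 4 / ε ^ 2 * y ^ 2 * Real.exp y = 4 / ε ^ 2 * (y ^ 2 * Real.exp y) := by ring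
      _ ≤ 4 / ε ^ 2 * (4 * (Real.exp y * Real.exp y)) := mul_le_mul_of_nonneg_left h5 hpos
      _ = 16 / ε ^ 2 * (Real.exp y * Real.exp y) := by ring
  calc (k : ℝ) ^ 2 * Real.exp ((ε/2) * |(k : ℝ)|) * θ k
      ≤ 16 / ε ^ 2 * Real.exp (ε * |(k : ℝ)|) * θ k :=
        mul_le_mul_of_nonneg_right hkey (hθ0 k)
    _ = 16 / ε ^ 2 * (Real.exp (ε * |(k : ℝ)|) * θ k) := by ring

lemma sum_lin (hε : 0 < ε) (hθ0 : ∀ k, 0 ≤ θ k) (hθs : Summable θ)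
    (hp : Summable fun k : ℤ => Real.exp (ε * k) * θ k)
    (hn : Summable fun k : ℤ => Real.exp (-ε * k) * θ k) :
    Summable fun k : ℤ => (k : ℝ) * θ k := by
  refine Summable.of_abs ?_
  refine Summable.of_nonneg_of_le (fun k => abs_nonneg _) (fun k => ?_)
    (hθs.add (sum_sq_exp hε hθ0 hp hn))
  have h1 : |(k : ℝ) * θ k| = |(k : ℝ)| * θ k := by
    rw [abs_mul, abs_of_nonneg (hθ0 k)]
  rw [h1]
  have h2 : |(k : ℝ)| ≤ 1 + (k : ℝ) ^ 2 * Real.exp ((ε/2) * |(k : ℝ)|) := by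
    have h3 : (1:ℝ) ≤ Real.exp ((ε/2) * |(k : ℝ)|) :=
      Real.one_le_exp (mul_nonneg (by linarith) (abs_nonneg _))
    nlinarith [sq_abs (k : ℝ), abs_nonneg (k : ℝ), sq_nonneg (|(k:ℝ)| - 1)]
  nlinarith [hθ0 k]

lemma sum_tilt (hθ0 : ∀ k, 0 ≤ θ k)
    (hp : Summable fun k : ℤ => Real.exp (ε * k) * θ k)
    (hn : Summable fun k : ℤ => Real.exp (-ε * k) * θ k)
    {β : ℝ} (hβ : |β| ≤ ε) :
    Summable fun k : ℤ => Real.exp (β * k) * θ k := by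
  refine Summable.of_nonneg_of_le (fun k => mul_nonneg (Real.exp_nonneg _) (hθ0 k))
    (fun k => ?_) (sum_exp_abs hθ0 hp hn)
  refine mul_le_mul_of_nonneg_right (Real.exp_le_exp.2 ?_) (hθ0 k)
  calc β * (k : ℝ) ≤ |β * (k : ℝ)| := le_abs_self _
    _ = |β| * |(k : ℝ)| := abs_mul _ _
    _ ≤ ε * |(k : ℝ)| := mul_le_mul_of_nonneg_right hβ (abs_nonneg _)

set_option maxHeartbeats 1000000 in
lemma quad_bound (hε : 0 < ε) (hθ0 : ∀ k, 0 ≤ θ k) (hθs : Summable θ)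
    (hp : Summable fun k : ℤ => Real.exp (ε * k) * θ k)
    (hn : Summable fun k : ℤ => Real.exp (-ε * k) * θ k)
    {β : ℝ} (hβ : |β| ≤ ε/2) :
    |(∑' k : ℤ, Real.exp (β * k) * θ k) - (∑' k : ℤ, θ k)
        - β * ∑' k : ℤ, (k : ℝ) * θ k|
      ≤ β ^ 2 * ∑' k : ℤ, (k : ℝ) ^ 2 * Real.exp ((ε/2) * |(k : ℝ)|) * θ k := by
  set f : ℤ → ℝ := fun k => (Real.exp (β * k) - 1 - β * k) * θ k with hf
  set D : ℤ → ℝ := fun k => β ^ 2 * ((k : ℝ) ^ 2 * Real.exp ((ε/2) * |(k : ℝ)|) * θ k) with hD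
  have hDsum : Summable D := (sum_sq_exp hε hθ0 hp hn).mul_left _
  have habs : ∀ k, |f k| ≤ D k := by
    intro k
    rw [hf, hD]
    have h1 : |(Real.exp (β * k) - 1 - β * k) * θ k|
        = |Real.exp (β * k) - 1 - β * k| * θ k := by
      rw [abs_mul, abs_of_nonneg (hθ0 k)]
    rw [h1]
    have h2 := exp_taylor2 (β * k)
    have h3 : Real.exp |β * (k : ℝ)| ≤ Real.exp ((ε/2) * |(k : ℝ)|) := by
      refine Real.exp_le_exp.2 ?_
      rw [abs_mul]
      exact mul_le_mul_of_nonneg_right hβ (abs_nonneg _)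
    have h4 : |Real.exp (β * k) - 1 - β * k| ≤ β ^ 2 * ((k:ℝ) ^ 2 * Real.exp ((ε/2) * |(k : ℝ)|)) := by
      calc |Real.exp (β * k) - 1 - β * k| ≤ (β * k) ^ 2 * Real.exp |β * (k:ℝ)| := h2
        _ ≤ (β * k) ^ 2 * Real.exp ((ε/2) * |(k : ℝ)|) :=
            mul_le_mul_of_nonneg_left h3 (sq_nonneg _)
        _ = β ^ 2 * ((k:ℝ) ^ 2 * Real.exp ((ε/2) * |(k : ℝ)|)) := by ring
    calc |Real.exp (β * k) - 1 - β * k| * θ k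
        ≤ β ^ 2 * ((k:ℝ) ^ 2 * Real.exp ((ε/2) * |(k : ℝ)|)) * θ k :=
          mul_le_mul_of_nonneg_right h4 (hθ0 k)
      _ = β ^ 2 * ((k:ℝ) ^ 2 * Real.exp ((ε/2) * |(k : ℝ)|) * θ k) := by ring
  have hfabs : Summable fun k => |f k| :=
    Summable.of_nonneg_of_le (fun k => abs_nonneg _) habs hDsum
  have hfsum : Summable f := hfabs.of_abs
  have he1 : Summable fun k : ℤ => Real.exp (β * k) * θ k :=
    sum_tilt hθ0 hp hn (by linarith [abs_nonneg β])
  have he3 : Summable fun k : ℤ => β * ((k : ℝ) * θ k) :=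
    (sum_lin hε hθ0 hθs hp hn).mul_left β
  have hsplit : f = fun k : ℤ => (Real.exp (β * k) * θ k - θ k) - β * ((k : ℝ) * θ k) := by
    funext k; rw [hf]; ring
  have htsum : ∑' k, f k = (∑' k : ℤ, Real.exp (β * k) * θ k) - (∑' k : ℤ, θ k)
      - β * ∑' k : ℤ, (k : ℝ) * θ k := by
    rw [hsplit, Summable.tsum_sub ((he1.sub hθs)) he3, Summable.tsum_sub he1 hθs, tsum_mul_left]
  rw [← htsum]
  have hnorm : Summable fun k : ℤ => ‖f k‖ := by simpa [Real.norm_eq_abs] using hfabs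
  calc |∑' k, f k| ≤ ∑' k, |f k| := by
        have h := norm_tsum_le_tsum_norm hnorm
        simpa [Real.norm_eq_abs] using h
    _ ≤ ∑' k, D k := Summable.tsum_le_tsum habs hfabs hDsum
    _ = β ^ 2 * ∑' k : ℤ, (k : ℝ) ^ 2 * Real.exp ((ε/2) * |(k : ℝ)|) * θ k := by
        rw [hD, tsum_mul_left]

lemma hasDerivAt_A (hε : 0 < ε) (hθ0 : ∀ k, 0 ≤ θ k) (hθs : Summable θ)
    (hp : Summable fun k : ℤ => Real.exp (ε * k) * θ k)
    (hn : Summable fun k : ℤ => Real.exp (-ε * k) * θ k) :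
    HasDerivAt (fun b : ℝ => ∑' k : ℤ, Real.exp (b * k) * θ k)
      (∑' k : ℤ, (k : ℝ) * θ k) 0 := by
  rw [hasDerivAt_iff_isLittleO]
  have hM0 : 0 ≤ ∑' k : ℤ, (k : ℝ) ^ 2 * Real.exp ((ε/2) * |(k : ℝ)|) * θ k :=
    tsum_nonneg fun k => mul_nonneg (mul_nonneg (sq_nonneg _) (Real.exp_nonneg _)) (hθ0 k)
  have hA0 : (∑' k : ℤ, Real.exp ((0:ℝ) * k) * θ k) = ∑' k : ℤ, θ k := by
    refine tsum_congr fun k => ?_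
    rw [zero_mul, Real.exp_zero, one_mul]
  have hbigO : (fun x : ℝ => (∑' k : ℤ, Real.exp (x * k) * θ k)
      - (∑' k : ℤ, Real.exp ((0:ℝ) * k) * θ k) - (x - 0) • (∑' k : ℤ, (k : ℝ) * θ k))
      =O[𝓝 0] fun x : ℝ => x ^ 2 := by
    rw [Asymptotics.isBigO_iff]
    refine ⟨∑' k : ℤ, (k : ℝ) ^ 2 * Real.exp ((ε/2) * |(k : ℝ)|) * θ k, ?_⟩
    filter_upwards [Metric.ball_mem_nhds (0:ℝ) (show (0:ℝ) < ε/2 by linarith)] with x hx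
    rw [mem_ball_zero_iff, Real.norm_eq_abs] at hx
    have hq := quad_bound hε hθ0 hθs hp hn (le_of_lt hx)
    rw [hA0, sub_zero, smul_eq_mul, Real.norm_eq_abs, Real.norm_eq_abs, abs_pow]
    calc |(∑' k : ℤ, Real.exp (x * k) * θ k) - (∑' k : ℤ, θ k)
          - x * ∑' k : ℤ, (k : ℝ) * θ k|
        ≤ x ^ 2 * ∑' k : ℤ, (k : ℝ) ^ 2 * Real.exp ((ε/2) * |(k : ℝ)|) * θ k := hq
      _ = (∑' k : ℤ, (k : ℝ) ^ 2 * Real.exp ((ε/2) * |(k : ℝ)|) * θ k) * |x| ^ 2 := by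
          rw [sq_abs]; ring
  refine hbigO.trans_isLittleO ?_
  have h1 : (fun x : ℝ => x) =o[𝓝 (0:ℝ)] fun _ => (1:ℝ) := by
    rw [Asymptotics.isLittleO_one_iff]
    exact Filter.tendsto_id
  have h2 := h1.mul_isBigO (Asymptotics.isBigO_refl (fun x : ℝ => x) (𝓝 0))
  have h3 : (fun x : ℝ => x ^ 2) = fun x : ℝ => x * x := funext fun x => sq x
  rw [h3]
  simpa using h2

lemma deriv_cgf_zero (hε : 0 < ε) (hθ0 : ∀ k, 0 ≤ θ k) (hθs : Summable θ)
    (hm : 0 < ∑' k : ℤ, θ k)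
    (hp : Summable fun k : ℤ => Real.exp (ε * k) * θ k)
    (hn : Summable fun k : ℤ => Real.exp (-ε * k) * θ k) :
    deriv (cgf θ) 0 = (∑' k : ℤ, (k : ℝ) * θ k) / (∑' k : ℤ, θ k) := by
  have hA0 : (∑' k : ℤ, Real.exp ((0:ℝ) * k) * θ k) = ∑' k : ℤ, θ k := by
    refine tsum_congr fun k => ?_
    rw [zero_mul, Real.exp_zero, one_mul]
  have hd := (hasDerivAt_A hε hθ0 hθs hp hn).log (by rw [hA0]; exact hm.ne')
  rw [hA0] at hd
  have hcgf : cgf θ = fun y : ℝ => Real.log (∑' k : ℤ, Real.exp (y * k) * θ k) := rfl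
  rw [hcgf]
  exact hd.deriv

lemma A_le_exp (hε : 0 < ε) (hθ0 : ∀ k, 0 ≤ θ k) (hθs : Summable θ)
    (hm : 0 < ∑' k : ℤ, θ k)
    (hp : Summable fun k : ℤ => Real.exp (ε * k) * θ k)
    (hn : Summable fun k : ℤ => Real.exp (-ε * k) * θ k)
    {β : ℝ} (hβ : |β| ≤ ε/2) :
    (∑' k : ℤ, Real.exp (β * k) * θ k) ≤ (∑' k : ℤ, θ k) *
      Real.exp (β * ((∑' k : ℤ, (k : ℝ) * θ k) / (∑' k : ℤ, θ k))
        + ((∑' k : ℤ, (k : ℝ) ^ 2 * Real.exp ((ε/2) * |(k : ℝ)|) * θ k) / (∑' k : ℤ, θ k)) * β ^ 2) := by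
  have hq := quad_bound hε hθ0 hθs hp hn hβ
  set m := ∑' k : ℤ, θ k
  set S0 := ∑' k : ℤ, (k : ℝ) * θ k
  set M := ∑' k : ℤ, (k : ℝ) ^ 2 * Real.exp ((ε/2) * |(k : ℝ)|) * θ k
  have h1 : (∑' k : ℤ, Real.exp (β * k) * θ k) ≤ m + β * S0 + β ^ 2 * M := by
    have := abs_le.1 hq
    linarith [this.2]
  have h2 : m + β * S0 + β ^ 2 * M = m * (1 + (β * (S0 / m) + (M / m) * β ^ 2)) := by
    field_simp
    ring
  have h3 : 1 + (β * (S0 / m) + (M / m) * β ^ 2)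
      ≤ Real.exp (β * (S0 / m) + (M / m) * β ^ 2) := by
    linarith [Real.add_one_le_exp (β * (S0 / m) + (M / m) * β ^ 2)]
  calc (∑' k : ℤ, Real.exp (β * k) * θ k) ≤ m + β * S0 + β ^ 2 * M := h1
    _ = m * (1 + (β * (S0 / m) + (M / m) * β ^ 2)) := h2
    _ ≤ m * Real.exp (β * (S0 / m) + (M / m) * β ^ 2) :=
        mul_le_mul_of_nonneg_left h3 hm.le

set_option maxHeartbeats 1000000 in
lemma key_bound (hε : 0 < ε) (hθ0 : ∀ k, 0 ≤ θ k) (hθs : Summable θ)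
    (hm : 0 < ∑' k : ℤ, θ k)
    (hmem : ∀ b : ℝ, |b| ≤ ε → Summable fun k : ℤ => Real.exp (b * k) * θ k)
    {δ : ℝ} (hδ0 : 0 < δ) (hδε : δ ≤ ε / 2)
    (hδK : ((∑' k : ℤ, (k : ℝ) ^ 2 * Real.exp ((ε/2) * |(k : ℝ)|) * θ k) / (∑' k : ℤ, θ k)) * δ ≤ 1/2)
    (C : ℝ) (n : ℕ) (hn : 1 ≤ n) :
    (n : ℝ) ^ C * ((∑' k : ℤ, θ k) ^ n)⁻¹ *
      ∑' k : {k : ℤ | (n : ℝ) ^ ((3 : ℝ) / 4) ≤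
        |(k : ℝ) - n * ((∑' j : ℤ, (j : ℝ) * θ j) / (∑' j : ℤ, θ j))|}, convPow θ n k
    ≤ 2 * (n : ℝ) ^ C * Real.exp (-(δ/2) * (n : ℝ) ^ ((1 : ℝ)/2)) := by
  have hp : Summable fun k : ℤ => Real.exp (ε * k) * θ k := hmem ε (by rw [abs_of_pos hε])
  have hq : Summable fun k : ℤ => Real.exp (-ε * k) * θ k := by
    have := hmem (-ε) (by rw [abs_neg, abs_of_pos hε])
    simpa [neg_mul] using this
  have hn1 : (1 : ℝ) ≤ (n : ℝ) := by exact_mod_cast hn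
  have hnpos : (0 : ℝ) < (n : ℝ) := lt_of_lt_of_le one_pos hn1
  have hM0 : 0 ≤ ∑' k : ℤ, (k : ℝ) ^ 2 * Real.exp ((ε/2) * |(k : ℝ)|) * θ k :=
    tsum_nonneg fun k => mul_nonneg (mul_nonneg (sq_nonneg _) (Real.exp_nonneg _)) (hθ0 k)
  set m := ∑' k : ℤ, θ k with hmdef
  set S0 := ∑' k : ℤ, (k : ℝ) * θ k with hS0def
  set M := ∑' k : ℤ, (k : ℝ) ^ 2 * Real.exp ((ε/2) * |(k : ℝ)|) * θ k with hMdef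
  set μ := S0 / m with hμdef
  set K := M / m with hKdef
  have hK0 : 0 ≤ K := div_nonneg hM0 hm.le
  set β := δ * (n : ℝ) ^ (-(1/4) : ℝ) with hβdef
  set t := (n : ℝ) ^ ((3 : ℝ)/4) with htdef
  have hβpos : 0 < β := mul_pos hδ0 (Real.rpow_pos_of_pos hnpos _)
  have hr1 : (n : ℝ) ^ (-(1/4) : ℝ) ≤ 1 :=
    Real.rpow_le_one_of_one_le_of_nonpos hn1 (by norm_num)
  have hβδ : β ≤ δ := by
    calc β = δ * (n : ℝ) ^ (-(1/4) : ℝ) := hβdef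
      _ ≤ δ * 1 := mul_le_mul_of_nonneg_left hr1 hδ0.le
      _ = δ := mul_one δ
  have hβε2 : |β| ≤ ε / 2 := by rw [abs_of_pos hβpos]; linarith
  have hβε : |β| ≤ ε := le_trans hβε2 (by linarith)
  have hsp : Summable fun k : ℤ => Real.exp (β * k) * θ k := hmem β hβε
  have hsn : Summable fun k : ℤ => Real.exp (-β * k) * θ k := by
    have := hmem (-β) (by rw [abs_neg]; exact hβε)
    simpa [neg_mul] using this
  have htb := tail_bound θ hθ0 hθs β t μ hβpos.le n hsp hsn
  -- upper bounds on the tilted sums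
  have hup1 : (∑' k : ℤ, Real.exp (β * k) * θ k) ≤ m * Real.exp (β * μ + K * β ^ 2) := by
    have h := A_le_exp hε hθ0 hθs hm hp hq hβε2
    exact h
  have hup2 : (∑' k : ℤ, Real.exp (-β * k) * θ k) ≤ m * Real.exp (-(β * μ) + K * β ^ 2) := by
    have h := A_le_exp hε hθ0 hθs hm hp hq (β := -β) (by rw [abs_neg]; exact hβε2)
    have h2 : (-β) * μ + K * (-β) ^ 2 = -(β * μ) + K * β ^ 2 := by ring
    rw [h2] at h
    have h3 : (fun k : ℤ => Real.exp (-β * k) * θ k) = fun k : ℤ => Real.exp ((-β) * k) * θ k := by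
      funext k; rw [neg_mul]
    calc (∑' k : ℤ, Real.exp (-β * k) * θ k)
        = ∑' k : ℤ, Real.exp ((-β) * k) * θ k := by rw [h3]
      _ ≤ m * Real.exp (-(β * μ) + K * β ^ 2) := h
  have hApnn : 0 ≤ ∑' k : ℤ, Real.exp (β * k) * θ k :=
    tsum_nonneg fun k => mul_nonneg (Real.exp_nonneg _) (hθ0 k)
  have hAnnn : 0 ≤ ∑' k : ℤ, Real.exp (-β * k) * θ k :=
    tsum_nonneg fun k => mul_nonneg (Real.exp_nonneg _) (hθ0 k)
  have hpow1 : (∑' k : ℤ, Real.exp (β * k) * θ k) ^ n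
      ≤ (m * Real.exp (β * μ + K * β ^ 2)) ^ n := pow_le_pow_left₀ hApnn hup1 n
  have hpow2 : (∑' k : ℤ, Real.exp (-β * k) * θ k) ^ n
      ≤ (m * Real.exp (-(β * μ) + K * β ^ 2)) ^ n := pow_le_pow_left₀ hAnnn hup2 n
  have hc1 : Real.exp (-β * (n * μ + t)) * (m * Real.exp (β * μ + K * β ^ 2)) ^ n
      = m ^ n * Real.exp ((n : ℝ) * K * β ^ 2 - β * t) := by
    rw [mul_pow, ← Real.exp_nat_mul, mul_left_comm, ← Real.exp_add]
    congr 1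
    ring
  have hc2 : Real.exp (β * (n * μ - t)) * (m * Real.exp (-(β * μ) + K * β ^ 2)) ^ n
      = m ^ n * Real.exp ((n : ℝ) * K * β ^ 2 - β * t) := by
    rw [mul_pow, ← Real.exp_nat_mul, mul_left_comm, ← Real.exp_add]
    congr 1
    ring
  have hT2 : (∑' k : {k : ℤ | t ≤ |(k : ℝ) - n * μ|}, convPow θ n k)
      ≤ 2 * m ^ n * Real.exp ((n : ℝ) * K * β ^ 2 - β * t) := by
    calc (∑' k : {k : ℤ | t ≤ |(k : ℝ) - n * μ|}, convPow θ n k)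
        ≤ Real.exp (-β * (n * μ + t)) * (∑' k : ℤ, Real.exp (β * k) * θ k) ^ n
          + Real.exp (β * (n * μ - t)) * (∑' k : ℤ, Real.exp (-β * k) * θ k) ^ n := htb
      _ ≤ Real.exp (-β * (n * μ + t)) * (m * Real.exp (β * μ + K * β ^ 2)) ^ n
          + Real.exp (β * (n * μ - t)) * (m * Real.exp (-(β * μ) + K * β ^ 2)) ^ n :=
          add_le_add (mul_le_mul_of_nonneg_left hpow1 (Real.exp_nonneg _))
            (mul_le_mul_of_nonneg_left hpow2 (Real.exp_nonneg _))
      _ = 2 * m ^ n * Real.exp ((n : ℝ) * K * β ^ 2 - β * t) := by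
          rw [hc1, hc2]; ring
  -- exponent estimate
  have hβ2 : β ^ 2 = δ ^ 2 * (n : ℝ) ^ (-(1/2) : ℝ) := by
    have hsq : ((n : ℝ) ^ (-(1/4) : ℝ)) ^ 2 = (n : ℝ) ^ (-(1/2) : ℝ) := by
      rw [← Real.rpow_natCast ((n : ℝ) ^ (-(1/4) : ℝ)) 2, ← Real.rpow_mul hnpos.le]
      norm_num
    rw [hβdef, mul_pow, hsq]
  have hnn : (n : ℝ) * (n : ℝ) ^ (-(1/2) : ℝ) = (n : ℝ) ^ ((1 : ℝ)/2) := by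
    have h := (Real.rpow_add hnpos 1 (-(1/2))).symm
    rw [Real.rpow_one] at h
    rw [h]
    norm_num
  have hβt : β * t = δ * (n : ℝ) ^ ((1 : ℝ)/2) := by
    rw [hβdef, htdef, mul_assoc, ← Real.rpow_add hnpos]
    norm_num
  have hexp : (n : ℝ) * K * β ^ 2 - β * t ≤ -(δ/2) * (n : ℝ) ^ ((1 : ℝ)/2) := by
    rw [hβ2, hβt]
    have hre : (n : ℝ) * K * (δ ^ 2 * (n : ℝ) ^ (-(1/2) : ℝ))
        = K * δ ^ 2 * ((n : ℝ) * (n : ℝ) ^ (-(1/2) : ℝ)) := by ring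
    rw [hre, hnn]
    have hs : 0 ≤ (n : ℝ) ^ ((1 : ℝ)/2) := Real.rpow_nonneg hnpos.le _
    have h1 : K * δ ^ 2 ≤ δ / 2 := by nlinarith [mul_le_mul_of_nonneg_right hδK hδ0.le]
    nlinarith [mul_le_mul_of_nonneg_right h1 hs]
  have hTfinal : (∑' k : {k : ℤ | t ≤ |(k : ℝ) - n * μ|}, convPow θ n k)
      ≤ 2 * m ^ n * Real.exp (-(δ/2) * (n : ℝ) ^ ((1 : ℝ)/2)) := by
    refine le_trans hT2 ?_
    have hmn : 0 ≤ 2 * m ^ n := by positivity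
    exact mul_le_mul_of_nonneg_left (Real.exp_le_exp.2 hexp) hmn
  have hTnn : 0 ≤ ∑' k : {k : ℤ | t ≤ |(k : ℝ) - n * μ|}, convPow θ n k :=
    tsum_nonneg fun k => convPow_nonneg θ hθ0 n k
  have hmn : (0 : ℝ) < m ^ n := pow_pos hm n
  have hfac : 0 ≤ (n : ℝ) ^ C * ((m : ℝ) ^ n)⁻¹ := by positivity
  calc (n : ℝ) ^ C * (m ^ n)⁻¹ * ∑' k : {k : ℤ | t ≤ |(k : ℝ) - n * μ|}, convPow θ n k
      ≤ (n : ℝ) ^ C * (m ^ n)⁻¹ * (2 * m ^ n * Real.exp (-(δ/2) * (n : ℝ) ^ ((1 : ℝ)/2))) :=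
        mul_le_mul_of_nonneg_left hTfinal hfac
    _ = 2 * (n : ℝ) ^ C * Real.exp (-(δ/2) * (n : ℝ) ^ ((1 : ℝ)/2)) := by
        field_simp

end Analysis

set_option maxHeartbeats 1000000 in
/-- superpolynomial smallness of the normalized tail mass of `ϑ^{*n}`
outside the window `|k - nφ'(0)| < n^{3/4}`: for every `C > 0`,
`lim_{n→∞} n^C m^{-n} ∑_{|k - nφ'(0)| ≥ n^{3/4}} ϑ^{*n}({k}) = 0`, where `m = ϑ(ℤ)`. -/
theorem chernoff_tail_convPow
    (θ : ℤ → ℝ) (hθ0 : ∀ k, 0 ≤ θ k) (hθs : Summable θ) (hmass : 0 < ∑' k : ℤ, θ k)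
    (h0 : (0 : ℝ) ∈ cgfDom θ) :
    ∀ C : ℝ, 0 < C →
      Tendsto
        (fun n : ℕ => (n : ℝ) ^ C * ((∑' k : ℤ, θ k) ^ n)⁻¹ *
          ∑' k : {k : ℤ | (n : ℝ) ^ ((3 : ℝ) / 4) ≤ |(k : ℝ) - n * deriv (cgf θ) 0|},
            convPow θ n k)
        atTop (𝓝 0) := by
  intro C hC
  have hm : 0 < ∑' k : ℤ, θ k := hmass
  rw [cgfDom, mem_interior_iff_mem_nhds, Metric.mem_nhds_iff] at h0
  obtain ⟨ε', hε'pos, hball⟩ := h0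
  have hε : 0 < ε' / 2 := by linarith
  have hmem : ∀ b : ℝ, |b| ≤ ε' / 2 → Summable fun k : ℤ => Real.exp (b * k) * θ k := by
    intro b hb
    have hmemball : b ∈ Metric.ball (0 : ℝ) ε' := by
      rw [Metric.mem_ball, Real.dist_eq, sub_zero]
      calc |b| ≤ ε' / 2 := hb
        _ < ε' := by linarith
    exact hball hmemball
  have hp := hmem (ε' / 2) (by rw [abs_of_pos hε])
  have hq : Summable fun k : ℤ => Real.exp (-(ε' / 2) * k) * θ k := by
    have h := hmem (-(ε' / 2)) (by rw [abs_neg, abs_of_pos hε])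
    simpa [neg_mul] using h
  have hder : deriv (cgf θ) 0 = (∑' k : ℤ, (k : ℝ) * θ k) / (∑' k : ℤ, θ k) :=
    deriv_cgf_zero hε hθ0 hθs hm hp hq
  have hM0 : 0 ≤ ∑' k : ℤ, (k : ℝ) ^ 2 * Real.exp ((ε' / 2 / 2) * |(k : ℝ)|) * θ k :=
    tsum_nonneg fun k => mul_nonneg (mul_nonneg (sq_nonneg _) (Real.exp_nonneg _)) (hθ0 k)
  obtain ⟨K, hKdef⟩ : ∃ K : ℝ, K = (∑' k : ℤ, (k : ℝ) ^ 2 * Real.exp ((ε' / 2 / 2) * |(k : ℝ)|) * θ k)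
      / (∑' k : ℤ, θ k) := ⟨_, rfl⟩
  have hK0 : 0 ≤ K := by rw [hKdef]; exact div_nonneg hM0 hm.le
  obtain ⟨δ, hδdef⟩ : ∃ δ : ℝ, δ = min (ε' / 2 / 2) (1 / (2 * (K + 1))) := ⟨_, rfl⟩
  have hδ0 : 0 < δ := by
    rw [hδdef]
    exact lt_min (by linarith) (by positivity)
  have hδε : δ ≤ ε' / 2 / 2 := by rw [hδdef]; exact min_le_left _ _
  have hδK : K * δ ≤ 1 / 2 := by
    have h1 : δ ≤ 1 / (2 * (K + 1)) := by rw [hδdef]; exact min_le_right _ _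
    have h2 : (0 : ℝ) < 2 * (K + 1) := by linarith
    calc K * δ ≤ K * (1 / (2 * (K + 1))) := mul_le_mul_of_nonneg_left h1 hK0
      _ ≤ 1 / 2 := by
          rw [mul_one_div, div_le_div_iff₀ h2 two_pos]
          linarith
  rw [hKdef] at hδK
  have hkey : ∀ n : ℕ, 1 ≤ n →
      (n : ℝ) ^ C * ((∑' k : ℤ, θ k) ^ n)⁻¹ *
        (∑' k : {k : ℤ | (n : ℝ) ^ ((3 : ℝ) / 4) ≤
          |(k : ℝ) - n * ((∑' j : ℤ, (j : ℝ) * θ j) / (∑' j : ℤ, θ j))|}, convPow θ n k)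
      ≤ 2 * (n : ℝ) ^ C * Real.exp (-(δ / 2) * (n : ℝ) ^ ((1 : ℝ) / 2)) := by
    intro n hn
    exact key_bound hε hθ0 hθs hm hmem hδ0 hδε hδK C n hn
  -- limit of the dominating sequence
  have hlim : Tendsto (fun n : ℕ => 2 * (n : ℝ) ^ C * Real.exp (-(δ / 2) * (n : ℝ) ^ ((1 : ℝ) / 2)))
      atTop (𝓝 0) := by
    have hb : 0 < δ / 2 := by linarith
    have base := tendsto_rpow_mul_exp_neg_mul_atTop_nhds_zero (2 * C) (δ / 2) hb
    have hcomp : Tendsto (fun n : ℕ => (n : ℝ) ^ ((1 : ℝ) / 2)) atTop atTop :=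
      (tendsto_rpow_atTop (by norm_num : (0 : ℝ) < 1 / 2)).comp tendsto_natCast_atTop_atTop
    have h2 := (base.comp hcomp).const_mul (2 : ℝ)
    rw [mul_zero] at h2
    refine Tendsto.congr' ?_ h2
    filter_upwards [eventually_ge_atTop 1] with n hn
    have hn1 : (1 : ℝ) ≤ (n : ℝ) := by exact_mod_cast hn
    have hn0 : (0 : ℝ) ≤ (n : ℝ) := by linarith
    have hrw : ((n : ℝ) ^ ((1 : ℝ) / 2)) ^ (2 * C) = (n : ℝ) ^ C := by
      rw [← Real.rpow_mul hn0, show ((1 : ℝ) / 2) * (2 * C) = C by ring]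
    show 2 * (((n : ℝ) ^ ((1 : ℝ) / 2)) ^ (2 * C) *
        Real.exp (-(δ / 2) * (n : ℝ) ^ ((1 : ℝ) / 2)))
      = 2 * (n : ℝ) ^ C * Real.exp (-(δ / 2) * (n : ℝ) ^ ((1 : ℝ) / 2))
    rw [hrw, mul_assoc]
  -- squeeze
  have hseteq : (fun n : ℕ => (n : ℝ) ^ C * ((∑' k : ℤ, θ k) ^ n)⁻¹ *
          ∑' k : {k : ℤ | (n : ℝ) ^ ((3 : ℝ) / 4) ≤ |(k : ℝ) - n * deriv (cgf θ) 0|},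
            convPow θ n k)
      = (fun n : ℕ => (n : ℝ) ^ C * ((∑' k : ℤ, θ k) ^ n)⁻¹ *
          ∑' k : {k : ℤ | (n : ℝ) ^ ((3 : ℝ) / 4) ≤
            |(k : ℝ) - n * ((∑' j : ℤ, (j : ℝ) * θ j) / (∑' j : ℤ, θ j))|},
            convPow θ n k) := by
    rw [hder]
  rw [hseteq]
  refine tendsto_of_tendsto_of_tendsto_of_le_of_le' tendsto_const_nhds hlim ?_ ?_
  · filter_upwards with n
    refine mul_nonneg (mul_nonneg ?_ ?_) ?_
    · exact Real.rpow_nonneg (Nat.cast_nonneg n) C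
    · exact inv_nonneg.2 (pow_nonneg hm.le n)
    · exact tsum_nonneg fun k => convPow_nonneg θ hθ0 n k
  · filter_upwards [eventually_ge_atTop 1] with n hn
    exact hkey n hn

end
end

section
/- Let (Ω, 𝔉, P) be a probability space, z₀ ∈ ℂ, ρ > 0, C < ∞ and κ ∈ (0,1). For each n ∈ ℕ₀ let g_n : Ω × ℂ → ℂ be such that for every ω ∈ Ω the function g_n(ω, ·) is holomorphic on an open set containing the closed disc {z : |z − z₀| ≤ 2ρ}, and ω ↦ g_n(ω, z) is measurable for every z. Assume E|g_{n+1}(·, z) − g_n(·, z)| ≤ C κⁿ for all n ∈ ℕ₀ and all z with |z − z₀| = 2ρ. Then for every ε > 0 with e^{ε}κ < 1 there exist a random variable M with M < ∞ almost surely and a map g_∞ : Ω × ℂ → ℂ such that g_∞(ω, ·) is holomorphic on the open disc {z : |z − z₀| < ρ} for almost every ω, and almost surely sup_{|z−z₀| < ρ} |g_n(·, z) − g_∞(·, z)| ≤ M e^{−εn} for all n ∈ ℕ₀. -/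
open MeasureTheory Metric Real Filter

lemma cauchy_est_aux {z₀ : ℂ} {ρ : ℝ} (hρ : 0 < ρ) {f : ℂ → ℂ}
    (hf : DifferentiableOn ℂ f (closedBall z₀ (2*ρ)))
    {z : ℂ} (hz : z ∈ ball z₀ ρ) :
    ‖f z‖ ≤ (1/π) * ∫ θ in (0:ℝ)..(2*π), ‖f (circleMap z₀ (2*ρ) θ)‖ := by
  have h2ρ : 0 < 2*ρ := by linarith
  have hz' : z ∈ ball z₀ (2*ρ) := by
    rw [mem_ball] at hz ⊢; linarith
  have hcif := hf.circleIntegral_sub_inv_smul hz'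
  have hcont : Continuous fun θ => f (circleMap z₀ (2*ρ) θ) := by
    refine hf.continuousOn.comp_continuous (continuous_circleMap _ _) fun θ => ?_
    exact sphere_subset_closedBall (circleMap_mem_sphere z₀ h2ρ.le θ)
  have hdist : ∀ θ : ℝ, ρ ≤ ‖circleMap z₀ (2*ρ) θ - z‖ := by
    intro θ
    have h1 : ‖circleMap z₀ (2*ρ) θ - z₀‖ = 2*ρ := by
      simpa [Complex.dist_eq] using (circleMap_mem_sphere z₀ h2ρ.le θ)
    have h2 : ‖z - z₀‖ < ρ := by simpa [Complex.dist_eq] using hz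
    have h3 : circleMap z₀ (2*ρ) θ - z₀ - (z - z₀) = circleMap z₀ (2*ρ) θ - z := by ring
    have h4 := norm_sub_norm_le (circleMap z₀ (2*ρ) θ - z₀) (z - z₀)
    rw [h3, h1] at h4
    linarith
  have hne : ∀ θ : ℝ, circleMap z₀ (2*ρ) θ - z ≠ 0 := by
    intro θ
    have := hdist θ
    intro hcc
    rw [hcc] at this
    simp at this
    linarith
  have key : ‖∮ w in C(z₀, 2*ρ), (w - z)⁻¹ • f w‖
      ≤ ∫ θ in (0:ℝ)..(2*π), 2 * ‖f (circleMap z₀ (2*ρ) θ)‖ := by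
    rw [circleIntegral]
    simp only [deriv_circleMap]
    refine (intervalIntegral.norm_integral_le_integral_norm (by positivity)).trans ?_
    have hcont2 : Continuous fun θ =>
        ‖(circleMap 0 (2*ρ) θ * Complex.I) • (circleMap z₀ (2*ρ) θ - z)⁻¹ •
          f (circleMap z₀ (2*ρ) θ)‖ := by
      refine Continuous.norm ?_
      exact ((continuous_circleMap 0 _).mul continuous_const).smul
        ((((continuous_circleMap _ _).sub continuous_const).inv₀ hne).smul hcont)
    refine intervalIntegral.integral_mono_on (by positivity) ?_ ?_ ?_
    · exact hcont2.intervalIntegrable _ _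
    · exact (continuous_const.mul hcont.norm).intervalIntegrable _ _
    · intro θ _
      have hnorm1 : ‖circleMap 0 (2*ρ) θ * Complex.I‖ = 2*ρ := by
        simp [abs_of_pos h2ρ]
      rw [norm_smul, norm_smul, norm_inv, hnorm1]
      have h2 : ‖circleMap z₀ (2*ρ) θ - z‖⁻¹ ≤ ρ⁻¹ := inv_anti₀ hρ (hdist θ)
      calc 2*ρ * (‖circleMap z₀ (2*ρ) θ - z‖⁻¹ * ‖f (circleMap z₀ (2*ρ) θ)‖)
          ≤ 2*ρ * (ρ⁻¹ * ‖f (circleMap z₀ (2*ρ) θ)‖) := by gcongr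
        _ = 2 * ‖f (circleMap z₀ (2*ρ) θ)‖ := by field_simp
  rw [hcif] at key
  have hπ : (0:ℝ) < π := Real.pi_pos
  have hn : ‖(2 * ↑π * Complex.I : ℂ) • f z‖ = 2*π*‖f z‖ := by
    rw [norm_smul]
    simp [abs_of_pos hπ, mul_assoc]
  rw [hn, intervalIntegral.integral_const_mul] at key
  rw [one_div, inv_mul_eq_div, le_div_iff₀ hπ]
  linarith

lemma cauchy_est_aux' {z₀ : ℂ} {ρ : ℝ} (hρ : 0 < ρ) {f : ℂ → ℂ}
    (hf : DifferentiableOn ℂ f (closedBall z₀ (2*ρ)))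
    {z : ℂ} (hz : z ∈ ball z₀ ρ) :
    (‖f z‖₊ : ENNReal) ≤ ENNReal.ofReal (1/π) *
      ∫⁻ θ in Set.Ioc 0 (2*π), ‖f (circleMap z₀ (2*ρ) θ)‖₊ := by
  have h2ρ : 0 < 2*ρ := by linarith
  have hcont : Continuous fun θ => f (circleMap z₀ (2*ρ) θ) := by
    refine hf.continuousOn.comp_continuous (continuous_circleMap _ _) fun θ => ?_
    exact sphere_subset_closedBall (circleMap_mem_sphere z₀ h2ρ.le θ)
  have hπ : (0:ℝ) < π := Real.pi_pos
  have hInt : IntegrableOn (fun θ => ‖f (circleMap z₀ (2*ρ) θ)‖) (Set.Ioc 0 (2*π)) :=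
    hcont.norm.integrableOn_Ioc
  have h1 : (∫⁻ θ in Set.Ioc 0 (2*π), ‖f (circleMap z₀ (2*ρ) θ)‖₊)
      = ENNReal.ofReal (∫ θ in Set.Ioc 0 (2*π), ‖f (circleMap z₀ (2*ρ) θ)‖) := by
    rw [ofReal_integral_eq_lintegral_ofReal hInt
      (Filter.Eventually.of_forall fun θ => norm_nonneg _)]
    simp_rw [ofReal_norm, enorm_eq_nnnorm]
  rw [h1, ← ENNReal.ofReal_mul (by positivity), ← enorm_eq_nnnorm, ← ofReal_norm]
  apply ENNReal.ofReal_le_ofReal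
  have := cauchy_est_aux hρ hf hz
  rwa [intervalIntegral.integral_of_le (by positivity)] at this

set_option maxHeartbeats 1000000 in
/-- almost sure exponentially fast convergence of a sequence of random
analytic functions whose successive circle-averaged `L¹`-differences decay geometrically. -/
theorem random_analytic_exponential_convergence
    {Ω : Type*} [MeasurableSpace Ω] (P : Measure Ω) [IsProbabilityMeasure P]
    (z₀ : ℂ) (ρ : ℝ) (hρ : 0 < ρ) (C : ℝ) (κ : ℝ) (hκ0 : 0 < κ) (hκ1 : κ < 1)
    (g : ℕ → Ω → ℂ → ℂ)
    (hol : ∀ (n : ℕ) (ω : Ω), ∃ U : Set ℂ, IsOpen U ∧ closedBall z₀ (2 * ρ) ⊆ U ∧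
      DifferentiableOn ℂ (g n ω) U)
    (meas : ∀ (n : ℕ) (z : ℂ), Measurable fun ω => g n ω z)
    (hmom : ∀ (n : ℕ) (z : ℂ), dist z z₀ = 2 * ρ →
      ∫⁻ ω, (‖g (n + 1) ω z - g n ω z‖₊ : ENNReal) ∂P ≤ ENNReal.ofReal (C * κ ^ n)) :
    ∀ ε : ℝ, 0 < ε → Real.exp ε * κ < 1 →
      ∃ (M : Ω → ℝ) (ginf : Ω → ℂ → ℂ),
        (∀ᵐ ω ∂P, DifferentiableOn ℂ (ginf ω) (ball z₀ ρ)) ∧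
        (∀ᵐ ω ∂P, ∀ n : ℕ, ∀ z ∈ ball z₀ ρ,
          ‖g n ω z - ginf ω z‖ ≤ M ω * Real.exp (-ε * n)) := by
  intro ε hε hεκ
  have hπ : (0:ℝ) < π := Real.pi_pos
  have h2ρ : 0 < 2*ρ := by linarith
  set c : ℝ → ℂ := circleMap z₀ (2*ρ) with hc
  have hdiff : ∀ n ω, DifferentiableOn ℂ (g n ω) (closedBall z₀ (2*ρ)) := by
    intro n ω; obtain ⟨U, hU, hsub, hd⟩ := hol n ω; exact hd.mono hsub
  have hdiffh : ∀ n ω, DifferentiableOn ℂ (fun z => g (n+1) ω z - g n ω z)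
      (closedBall z₀ (2*ρ)) := fun n ω => (hdiff (n+1) ω).sub (hdiff n ω)
  have hcont : ∀ n ω, Continuous fun θ => g n ω (c θ) := by
    intro n ω
    refine (hdiff n ω).continuousOn.comp_continuous (continuous_circleMap _ _) fun θ => ?_
    exact sphere_subset_closedBall (circleMap_mem_sphere z₀ h2ρ.le θ)
  set D : ℕ → Ω → ENNReal :=
    fun n ω => ∫⁻ θ in Set.Ioc 0 (2*π), ‖g (n+1) ω (c θ) - g n ω (c θ)‖₊ with hDdef
  -- joint measurability
  have hjoint : ∀ n, Measurable
      (Function.uncurry fun (ω:Ω) (θ:ℝ) => (‖g (n+1) ω (c θ) - g n ω (c θ)‖₊ : ENNReal)) := by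
    intro n
    have hm : ∀ k, Measurable (Function.uncurry fun (θ:ℝ) (ω:Ω) => g k ω (c θ)) := fun k =>
      measurable_uncurry_of_continuous_of_measurable (fun ω => hcont k ω) (fun θ => meas k (c θ))
    have hm' : ∀ k, Measurable fun p : Ω × ℝ => g k p.1 (c p.2) := fun k =>
      (hm k).comp measurable_swap
    exact (((hm' (n+1)).sub (hm' n)).nnnorm).coe_nnreal_ennreal
  have hDmeas : ∀ n, Measurable (D n) := fun n =>
    Measurable.lintegral_prod_right (ν := volume.restrict (Set.Ioc 0 (2*π))) (hjoint n)
  have hDexp : ∀ n, ∫⁻ ω, D n ω ∂P ≤ ENNReal.ofReal (C * κ^n) * ENNReal.ofReal (2*π) := by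
    intro n
    have hswap := lintegral_lintegral_swap
      (μ := P) (ν := volume.restrict (Set.Ioc 0 (2*π))) ((hjoint n).aemeasurable)
    calc ∫⁻ ω, D n ω ∂P
        = ∫⁻ θ in Set.Ioc 0 (2*π), ∫⁻ ω, (‖g (n+1) ω (c θ) - g n ω (c θ)‖₊ : ENNReal) ∂P := hswap
      _ ≤ ∫⁻ _ in Set.Ioc 0 (2*π), ENNReal.ofReal (C*κ^n) := by
          refine lintegral_mono_ae (Filter.Eventually.of_forall fun θ => ?_)
          exact hmom n (c θ) (mem_sphere.mp (circleMap_mem_sphere z₀ h2ρ.le θ))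
      _ = ENNReal.ofReal (C * κ^n) * ENNReal.ofReal (2*π) := by
          rw [setLIntegral_const, Real.volume_Ioc]
          norm_num
  set r : ℝ := Real.exp ε * κ with hr
  have hr0 : 0 ≤ r := by positivity
  set S : ℕ → Ω → ENNReal :=
    fun n ω => ENNReal.ofReal (Real.exp (ε*n) / π) * D n ω with hSdef
  have hSmeas : ∀ n, Measurable (S n) := fun n => (hDmeas n).const_mul _
  have hSexp : ∀ n, ∫⁻ ω, S n ω ∂P ≤ ENNReal.ofReal (2 * |C| * r ^ n) := by
    intro n
    rw [hSdef]
    simp only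
    rw [lintegral_const_mul' _ _ ENNReal.ofReal_ne_top]
    calc ENNReal.ofReal (Real.exp (ε*n) / π) * ∫⁻ ω, D n ω ∂P
        ≤ ENNReal.ofReal (Real.exp (ε*n) / π) *
            (ENNReal.ofReal (C * κ^n) * ENNReal.ofReal (2*π)) := by
          gcongr
          exact hDexp n
      _ ≤ ENNReal.ofReal (Real.exp (ε*n) / π) *
            (ENNReal.ofReal (|C| * κ^n) * ENNReal.ofReal (2*π)) := by
          refine mul_le_mul_right (mul_le_mul_left (ENNReal.ofReal_le_ofReal ?_) _) _
          have h1 : C ≤ |C| := le_abs_self C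
          have hκn : (0:ℝ) ≤ κ^n := by positivity
          nlinarith
      _ = ENNReal.ofReal (Real.exp (ε*n) / π * (|C| * κ^n * (2*π))) := by
          rw [← ENNReal.ofReal_mul (by positivity), ← ENNReal.ofReal_mul (by positivity)]
      _ = ENNReal.ofReal (2 * |C| * r ^ n) := by
          congr 1
          have he : Real.exp (ε*n) = (Real.exp ε)^n := by
            rw [mul_comm, Real.exp_nat_mul]
          rw [hr, mul_pow, he]
          field_simp
  have hsum_int : ∫⁻ ω, ∑' n, S n ω ∂P < ⊤ := by
    rw [lintegral_tsum (fun n => (hSmeas n).aemeasurable)]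
    refine lt_of_le_of_lt (ENNReal.tsum_le_tsum hSexp) ?_
    have hsummable : Summable (fun n => 2 * |C| * r ^ n) :=
      (summable_geometric_of_lt_one hr0 hεκ).mul_left _
    calc ∑' n, ENNReal.ofReal (2 * |C| * r ^ n)
        = ENNReal.ofReal (∑' n, 2 * |C| * r ^ n) :=
          (ENNReal.ofReal_tsum_of_nonneg (fun n => by positivity) hsummable).symm
      _ < ⊤ := ENNReal.ofReal_lt_top
  have hae : ∀ᵐ ω ∂P, ∑' n, S n ω < ⊤ :=
    ae_lt_top (Measurable.ennreal_tsum hSmeas) hsum_int.ne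
  -- pointwise Cauchy-estimate bound
  have hkey : ∀ n ω, ∀ z ∈ ball z₀ ρ, (‖g (n+1) ω z - g n ω z‖₊ : ENNReal)
      ≤ ENNReal.ofReal (Real.exp (-(ε*n))) * S n ω := by
    intro n ω z hz
    have h1 := cauchy_est_aux' hρ (hdiffh n ω) hz
    have h2 : ENNReal.ofReal (Real.exp (-(ε*n))) * S n ω
        = ENNReal.ofReal (1/π) * D n ω := by
      rw [hSdef]
      simp only
      rw [← mul_assoc, ← ENNReal.ofReal_mul (Real.exp_nonneg _)]
      congr 2
      rw [div_eq_mul_inv, ← mul_assoc, ← Real.exp_add]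
      simp
    rw [h2]
    exact h1
  have hballsub : ball z₀ ρ ⊆ closedBall z₀ (2*ρ) :=
    (ball_subset_ball (by linarith)).trans ball_subset_closedBall
  have main : ∀ᵐ ω ∂P,
      DifferentiableOn ℂ (fun z => g 0 ω z + ∑' k, (g (k+1) ω z - g k ω z)) (ball z₀ ρ) ∧
      ∀ n : ℕ, ∀ z ∈ ball z₀ ρ,
        ‖g n ω z - (g 0 ω z + ∑' k, (g (k+1) ω z - g k ω z))‖
          ≤ (∑' k, (S k ω).toReal) * Real.exp (-ε * n) := by
    filter_upwards [hae] with ω hω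
    have hfin : ∑' n, S n ω ≠ ⊤ := hω.ne
    have hSfin : ∀ n, S n ω ≠ ⊤ := fun n => ENNReal.ne_top_of_tsum_ne_top hfin n
    have hsummS : Summable fun n => (S n ω).toReal := ENNReal.summable_toReal hfin
    set b : ℕ → ℝ := fun n => Real.exp (-(ε*n)) * (S n ω).toReal with hbdef
    have hb_nonneg : ∀ n, 0 ≤ b n := fun n => by positivity
    have hb_le : ∀ n, b n ≤ (S n ω).toReal := by
      intro n
      refine mul_le_of_le_one_left ENNReal.toReal_nonneg ?_
      refine Real.exp_le_one_iff.mpr ?_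
      have : (0:ℝ) ≤ ε * n := by positivity
      linarith
    have hb_summ : Summable b := hsummS.of_nonneg_of_le hb_nonneg hb_le
    have hle : ∀ n, ∀ z ∈ ball z₀ ρ, ‖g (n+1) ω z - g n ω z‖ ≤ b n := by
      intro n z hz
      have hne : ENNReal.ofReal (Real.exp (-(ε*n))) * S n ω ≠ ⊤ :=
        ENNReal.mul_ne_top ENNReal.ofReal_ne_top (hSfin n)
      have := ENNReal.toReal_mono hne (hkey n ω z hz)
      rw [ENNReal.toReal_mul, ENNReal.toReal_ofReal (Real.exp_nonneg _)] at this
      simpa [hbdef] using this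
    have hunif : TendstoUniformlyOn
        (fun N z => ∑ k ∈ Finset.range N, (g (k+1) ω z - g k ω z))
        (fun z => ∑' k, (g (k+1) ω z - g k ω z)) atTop (ball z₀ ρ) :=
      tendstoUniformlyOn_tsum_nat hb_summ (fun n z hz => hle n z hz)
    constructor
    · have hGdiff : ∀ N : ℕ, DifferentiableOn ℂ
          (fun z => ∑ k ∈ Finset.range N, (g (k+1) ω z - g k ω z)) (ball z₀ ρ) := by
        intro N
        apply DifferentiableOn.fun_sum
        intro k _
        exact ((hdiffh k ω).mono hballsub)
      have hdiff_tsum : DifferentiableOn ℂ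
          (fun z => ∑' k, (g (k+1) ω z - g k ω z)) (ball z₀ ρ) :=
        (hunif.tendstoLocallyUniformlyOn).differentiableOn
          (Filter.Eventually.of_forall hGdiff) isOpen_ball
      exact ((hdiff 0 ω).mono hballsub).add hdiff_tsum
    · intro n z hz
      have hsz : Summable fun k => g (k+1) ω z - g k ω z :=
        Summable.of_norm_bounded hb_summ (fun k => hle k z hz)
      have htel := Summable.sum_add_tsum_nat_add n hsz
      have htel2 : ∑ k ∈ Finset.range n, (g (k+1) ω z - g k ω z)
          = g n ω z - g 0 ω z := Finset.sum_range_sub (fun k => g k ω z) n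
      have hdiffeq : g n ω z - (g 0 ω z + ∑' k, (g (k+1) ω z - g k ω z))
          = -(∑' k, (g (k+n+1) ω z - g (k+n) ω z)) := by
        rw [← htel, htel2]
        ring
      rw [hdiffeq, norm_neg]
      have hshift_summ : Summable fun k => b (k+n) := (summable_nat_add_iff n).2 hb_summ
      have hshiftS_summ : Summable fun k => (S (k+n) ω).toReal :=
        (summable_nat_add_iff n).2 hsummS
      have h5 : ‖∑' k, (g (k+n+1) ω z - g (k+n) ω z)‖ ≤ ∑' k, b (k+n) :=
        tsum_of_norm_bounded hshift_summ.hasSum (fun k => hle (k+n) z hz)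
      have h6 : ∀ k : ℕ, b (k+n) ≤ Real.exp (-(ε*n)) * (S (k+n) ω).toReal := by
        intro k
        rw [hbdef]
        simp only
        refine mul_le_mul_of_nonneg_right ?_ ENNReal.toReal_nonneg
        refine Real.exp_le_exp.2 ?_
        push_cast
        nlinarith [hε.le, (Nat.cast_nonneg k : (0:ℝ) ≤ (k:ℝ))]
      have h7 : ∑' k, b (k+n) ≤ Real.exp (-(ε*n)) * ∑' k, (S (k+n) ω).toReal := by
        rw [← tsum_mul_left]
        exact Summable.tsum_le_tsum h6 hshift_summ (hshiftS_summ.mul_left _)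
      have h8 : ∑' k, (S (k+n) ω).toReal ≤ ∑' k, (S k ω).toReal := by
        have := Summable.sum_add_tsum_nat_add n hsummS
        have hpart : 0 ≤ ∑ k ∈ Finset.range n, (S k ω).toReal :=
          Finset.sum_nonneg fun k _ => ENNReal.toReal_nonneg
        linarith
      calc ‖∑' k, (g (k+n+1) ω z - g (k+n) ω z)‖
          ≤ ∑' k, b (k+n) := h5
        _ ≤ Real.exp (-(ε*n)) * ∑' k, (S (k+n) ω).toReal := h7
        _ ≤ Real.exp (-(ε*n)) * ∑' k, (S k ω).toReal :=
            mul_le_mul_of_nonneg_left h8 (Real.exp_nonneg _)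
        _ = (∑' k, (S k ω).toReal) * Real.exp (-ε * n) := by
            rw [mul_comm, neg_mul]
  exact ⟨fun ω => ∑' n, (S n ω).toReal,
    fun ω z => g 0 ω z + ∑' n, (g (n+1) ω z - g n ω z),
    main.mono fun ω h => h.1, main.mono fun ω h => h.2⟩
end

section
/- Assume the support of ϑ contains at least two points; let K ⊂ 𝒟_φ be compact, r ∈ ℕ₀ and ε₀ > 0, and let w_n (n ∈ ℕ) and w_∞ be holomorphic functions on U = {z ∈ ℂ : dist(z, K) < 2ε₀}. Assume there are constants A < ∞ and c > 0 such that sup_{dist(z,K) ≤ ε₀} |w_n(z) − w_∞(z)| ≤ A e^{−cn} for all n ∈ ℕ. Then there exist ε > 0 and M < ∞ such that for every β ∈ K, every n ∈ ℕ and every s ∈ ℂ with |s| ≤ ε σ(β) √n: | w_n(β + is/(σ(β)√n)) − ∑_{j=0}^{r} n^{−j/2} (w_∞^{(j)}(β)/j!) (is/σ(β))^j | ≤ M n^{−(r+1)/2} (1 + |s|^{r+1}). -/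
open Real Filter Topology MeasureTheory Metric Set

noncomputable section

/-- Cauchy-estimate coefficient bound. -/
lemma coeff_bound {f : ℂ → ℂ} {c : ℂ} {R B : ℝ} (hR : 0 < R)
    (hf : ContinuousOn f (Metric.closedBall c R))
    (hB : ∀ z ∈ Metric.closedBall c R, ‖f z‖ ≤ B) (n : ℕ) :
    ‖(cauchyPowerSeries f c R).coeff n‖ ≤ B / R ^ n := by
  have hmem : ∀ θ : ℝ, circleMap c R θ ∈ Metric.closedBall c R := fun θ =>
    circleMap_mem_closedBall c hR.le θ
  have hcont : Continuous fun θ : ℝ => ‖f (circleMap c R θ)‖ :=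
    (hf.comp_continuous (continuous_circleMap c R) hmem).norm
  have hint : (∫ θ : ℝ in (0)..2 * Real.pi, ‖f (circleMap c R θ)‖) ≤ 2 * Real.pi * B := by
    calc (∫ θ : ℝ in (0)..2 * Real.pi, ‖f (circleMap c R θ)‖)
        ≤ ∫ _ : ℝ in (0)..2 * Real.pi, B := by
          apply intervalIntegral.integral_mono_on Real.two_pi_pos.le
            (hcont.intervalIntegrable _ _) intervalIntegrable_const
          intro θ _; exact hB _ (hmem θ)
      _ = 2 * Real.pi * B := by simp [mul_comm]
  have h1 : ‖(cauchyPowerSeries f c R).coeff n‖ ≤ ‖cauchyPowerSeries f c R n‖ := by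
    rw [FormalMultilinearSeries.coeff]
    refine le_trans ((cauchyPowerSeries f c R n).le_opNorm _) ?_
    simp
  refine h1.trans ((norm_cauchyPowerSeries_le f c R n).trans ?_)
  rw [abs_of_pos hR]
  have h2 : (2 * Real.pi)⁻¹ * ∫ θ : ℝ in (0)..2 * Real.pi, ‖f (circleMap c R θ)‖ ≤ B := by
    rw [inv_mul_le_iff₀ (by positivity)]
    linarith [hint]
  have hBnn : 0 ≤ B := le_trans (norm_nonneg _) (hB c (by simp [hR.le]))
  calc ((2 * Real.pi)⁻¹ * ∫ θ : ℝ in (0)..2 * Real.pi, ‖f (circleMap c R θ)‖) * R⁻¹ ^ n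
      ≤ B * R⁻¹ ^ n := by
        apply mul_le_mul_of_nonneg_right h2 (by positivity)
    _ = B / R ^ n := by rw [inv_pow, div_eq_mul_inv]

/-- Uniform Taylor remainder bound for a holomorphic function on a closed ball. -/
lemma taylor_remainder_bound {f : ℂ → ℂ} {c : ℂ} {ε₀ B : ℝ} (hε₀ : 0 < ε₀)
    (hf : DifferentiableOn ℂ f (Metric.closedBall c ε₀))
    (hB : ∀ z ∈ Metric.closedBall c ε₀, ‖f z‖ ≤ B) (r : ℕ)
    (y : ℂ) (hy : ‖y‖ ≤ ε₀ / 2) :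
    ‖f (c + y) - ∑ j ∈ Finset.range (r + 1),
      (iteratedDeriv j f c / (Nat.factorial j)) * y ^ j‖ ≤
      2 * B * (‖y‖ / ε₀) ^ (r + 1) := by
  set R : NNReal := ⟨ε₀, hε₀.le⟩ with hRdef
  have hRc : (R : ℝ) = ε₀ := rfl
  have hps : HasFPowerSeriesOnBall f (cauchyPowerSeries f c R) c R := by
    apply DifferentiableOn.hasFPowerSeriesOnBall (R := R) ?_ (by rw [← NNReal.coe_pos, hRc]; exact hε₀)
    rw [hRc]; exact hf
  set p := cauchyPowerSeries f c (R : ℝ) with hpdef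
  have hcoeff : ∀ j : ℕ, p.coeff j = iteratedDeriv j f c / (Nat.factorial j) := by
    intro j
    have h1 := hps.factorial_smul (y := (1 : ℂ)) j
    have h2 : iteratedFDeriv ℂ j f c (fun _ => (1 : ℂ)) = iteratedDeriv j f c := by
      rw [iteratedDeriv_eq_iteratedFDeriv]
    rw [h2] at h1
    have : ((Nat.factorial j : ℂ)) * p.coeff j = iteratedDeriv j f c := by
      rw [← h1, FormalMultilinearSeries.coeff]
      simp [nsmul_eq_mul]
    rw [← this, mul_comm, mul_div_assoc, div_self (by exact_mod_cast Nat.factorial_ne_zero j), mul_one]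
  have hcb : ∀ j : ℕ, ‖p.coeff j‖ ≤ B / ε₀ ^ j := fun j =>
    coeff_bound hε₀ hf.continuousOn hB j
  have hyR : y ∈ Metric.eball (0 : ℂ) R := by
    rw [mem_eball_zero_iff]
    have : ‖y‖ < ε₀ := lt_of_le_of_lt hy (by linarith)
    have h' : ‖y‖₊ < R := by rwa [← NNReal.coe_lt_coe, coe_nnnorm, hRc]
    exact_mod_cast h'
  have hsum : HasSum (fun j : ℕ => y ^ j * p.coeff j) (f (c + y)) := by
    have := hps.hasSum hyR
    refine this.congr_fun ?_
    intro j
    rw [FormalMultilinearSeries.apply_eq_pow_smul_coeff, smul_eq_mul]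
  have hsummable : Summable fun j : ℕ => y ^ j * p.coeff j := hsum.summable
  have hshift : ∑ j ∈ Finset.range (r + 1), y ^ j * p.coeff j
      + ∑' i : ℕ, y ^ (i + (r + 1)) * p.coeff (i + (r + 1)) = f (c + y) := by
    rw [← hsum.tsum_eq]
    exact Summable.sum_add_tsum_nat_add (r + 1) hsummable
  have hBnn : 0 ≤ B := le_trans (norm_nonneg _) (hB c (by simp [hε₀.le]))
  set t : ℝ := ‖y‖ / ε₀ with htdef
  have ht0 : 0 ≤ t := by positivity
  have ht2 : t ≤ 1 / 2 := by
    rw [htdef, div_le_div_iff₀ (by positivity) (by norm_num)]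
    linarith
  have ht1 : t < 1 := lt_of_le_of_lt ht2 (by norm_num)
  have hterm : ∀ i : ℕ, ‖y ^ (i + (r + 1)) * p.coeff (i + (r + 1))‖ ≤ B * t ^ (r + 1) * t ^ i := by
    intro i
    rw [norm_mul, norm_pow]
    calc ‖y‖ ^ (i + (r + 1)) * ‖p.coeff (i + (r + 1))‖
        ≤ ‖y‖ ^ (i + (r + 1)) * (B / ε₀ ^ (i + (r + 1))) := by
          apply mul_le_mul_of_nonneg_left (hcb _) (by positivity)
      _ = B * t ^ (i + (r + 1)) := by
          rw [htdef, div_pow]; field_simp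
      _ = B * t ^ (r + 1) * t ^ i := by rw [pow_add]; ring
  have hgeo : Summable (fun i : ℕ => B * t ^ (r + 1) * t ^ i) :=
    (summable_geometric_of_lt_one ht0 ht1).mul_left _
  have hsumm2 : Summable (fun i : ℕ => ‖y ^ (i + (r + 1)) * p.coeff (i + (r + 1))‖) :=
    Summable.of_nonneg_of_le (fun i => norm_nonneg _) hterm hgeo
  have htail : ‖∑' i : ℕ, y ^ (i + (r + 1)) * p.coeff (i + (r + 1))‖
      ≤ 2 * B * t ^ (r + 1) := by
    calc ‖∑' i : ℕ, y ^ (i + (r + 1)) * p.coeff (i + (r + 1))‖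
        ≤ ∑' i : ℕ, ‖y ^ (i + (r + 1)) * p.coeff (i + (r + 1))‖ :=
          norm_tsum_le_tsum_norm hsumm2
      _ ≤ ∑' i : ℕ, B * t ^ (r + 1) * t ^ i := Summable.tsum_le_tsum hterm hsumm2 hgeo
      _ = B * t ^ (r + 1) * (1 - t)⁻¹ := by
          rw [tsum_mul_left, tsum_geometric_of_lt_one ht0 ht1]
      _ ≤ B * t ^ (r + 1) * 2 := by
          apply mul_le_mul_of_nonneg_left ?_ (by positivity)
          rw [inv_le_comm₀ (by linarith) (by norm_num)]
          linarith
      _ = 2 * B * t ^ (r + 1) := by ring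
  have heq : f (c + y) - ∑ j ∈ Finset.range (r + 1),
      (iteratedDeriv j f c / (Nat.factorial j)) * y ^ j
      = ∑' i : ℕ, y ^ (i + (r + 1)) * p.coeff (i + (r + 1)) := by
    rw [← hshift]
    have : ∑ j ∈ Finset.range (r + 1), (iteratedDeriv j f c / (Nat.factorial j)) * y ^ j
        = ∑ j ∈ Finset.range (r + 1), y ^ j * p.coeff j := by
      apply Finset.sum_congr rfl; intro j _; rw [hcoeff j]; ring
    rw [this]; ring
  rw [heq]
  exact htail


namespace CGFAux

/-- `F_j(β) = ∑ k^j e^{βk} θ(k)`. -/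
def Fj (θ : ℤ → ℝ) (j : ℕ) (β : ℝ) : ℝ := ∑' k : ℤ, (k : ℝ) ^ j * (Real.exp (β * k) * θ k)

lemma pow_le_exp_aux (j : ℕ) {η x : ℝ} (hη : 0 < η) (hx : 0 ≤ x) :
    x ^ j ≤ (Nat.factorial j) * η⁻¹ ^ j * Real.exp (η * x) := by
  have h1 : (η * x) ^ j / (Nat.factorial j) ≤ Real.exp (η * x) :=
    Real.pow_div_factorial_le_exp (x := η * x) (by positivity) j
  have h2 : x ^ j = η⁻¹ ^ j * (η * x) ^ j := by
    rw [mul_pow, ← mul_assoc, ← mul_pow, inv_mul_cancel₀ hη.ne', one_pow, one_mul]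
  rw [h2]
  have h3 : (η * x) ^ j ≤ (Nat.factorial j) * Real.exp (η * x) := by
    rw [div_le_iff₀ (by positivity : (0:ℝ) < (Nat.factorial j : ℝ))] at h1
    linarith [h1]
  calc η⁻¹ ^ j * (η * x) ^ j ≤ η⁻¹ ^ j * ((Nat.factorial j) * Real.exp (η * x)) := by
        apply mul_le_mul_of_nonneg_left h3 (by positivity)
    _ = (Nat.factorial j) * η⁻¹ ^ j * Real.exp (η * x) := by ring

lemma term_bound (θ : ℤ → ℝ) (hθ0 : ∀ k, 0 ≤ θ k) (j : ℕ) {a b η β : ℝ} (hη : 0 < η)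
    (h1 : a + η ≤ β) (h2 : β ≤ b - η) (k : ℤ) :
    ‖(k : ℝ) ^ j * (Real.exp (β * k) * θ k)‖ ≤
      (Nat.factorial j) * η⁻¹ ^ j * ((Real.exp (a * k) + Real.exp (b * k)) * θ k) := by
  have hθk := hθ0 k
  have hb : |(k : ℝ)| ^ j * Real.exp (β * k) ≤
      (Nat.factorial j) * η⁻¹ ^ j * (Real.exp (a * k) + Real.exp (b * k)) := by
    have habs : |(k : ℝ)| ^ j ≤ (Nat.factorial j) * η⁻¹ ^ j * Real.exp (η * |(k : ℝ)|) :=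
      pow_le_exp_aux j hη (abs_nonneg _)
    have hkey : η * |(k : ℝ)| + β * k ≤ max (a * k) (b * k) := by
      rcases le_or_gt 0 (k : ℝ) with hk | hk
      · rw [abs_of_nonneg hk]
        refine le_trans ?_ (le_max_right _ _)
        nlinarith
      · rw [abs_of_neg hk]
        refine le_trans ?_ (le_max_left _ _)
        nlinarith
    calc |(k : ℝ)| ^ j * Real.exp (β * k)
        ≤ ((Nat.factorial j) * η⁻¹ ^ j * Real.exp (η * |(k : ℝ)|)) * Real.exp (β * k) := by
          apply mul_le_mul_of_nonneg_right habs (Real.exp_pos _).le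
      _ = (Nat.factorial j) * η⁻¹ ^ j * Real.exp (η * |(k : ℝ)| + β * k) := by
          rw [Real.exp_add]; ring
      _ ≤ (Nat.factorial j) * η⁻¹ ^ j * (Real.exp (a * k) + Real.exp (b * k)) := by
          apply mul_le_mul_of_nonneg_left ?_ (by positivity)
          refine le_trans (Real.exp_le_exp.mpr hkey) ?_
          rcases max_cases (a * (k:ℝ)) (b * (k:ℝ)) with ⟨hm, _⟩ | ⟨hm, _⟩ <;> rw [hm] <;>
            [linarith [(Real.exp_pos (b * (k:ℝ))).le]; linarith [(Real.exp_pos (a * (k:ℝ))).le]]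
  calc ‖(k : ℝ) ^ j * (Real.exp (β * k) * θ k)‖
      = |(k : ℝ)| ^ j * Real.exp (β * k) * θ k := by
        rw [norm_mul, norm_mul, Real.norm_eq_abs, Real.norm_eq_abs, Real.norm_eq_abs,
          abs_pow, abs_of_pos (Real.exp_pos _), abs_of_nonneg hθk, mul_assoc]
    _ ≤ ((Nat.factorial j) * η⁻¹ ^ j * (Real.exp (a * k) + Real.exp (b * k))) * θ k := by
        apply mul_le_mul_of_nonneg_right hb hθk
    _ = (Nat.factorial j) * η⁻¹ ^ j * ((Real.exp (a * k) + Real.exp (b * k)) * θ k) := by ring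

lemma summable_majorant (θ : ℤ → ℝ) {a b : ℝ} (ha : a ∈ finiteSet θ) (hb : b ∈ finiteSet θ)
    (C : ℝ) : Summable fun k : ℤ => C * ((Real.exp (a * k) + Real.exp (b * k)) * θ k) := by
  apply Summable.mul_left
  have := (ha.add hb)
  apply this.congr
  intro k; ring

lemma summable_pow_mul (θ : ℤ → ℝ) (hθ0 : ∀ k, 0 ≤ θ k) {β : ℝ} (hβ : β ∈ cgfDom θ) (j : ℕ) :
    Summable fun k : ℤ => (k : ℝ) ^ j * (Real.exp (β * k) * θ k) := by
  obtain ⟨ε, hε, hball⟩ := Metric.isOpen_iff.mp isOpen_interior β hβ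
  have hsub : Metric.ball β ε ⊆ finiteSet θ := hball.trans interior_subset
  have ha : β - ε / 2 ∈ finiteSet θ := hsub (by rw [Metric.mem_ball, Real.dist_eq, show β - ε / 2 - β = -(ε/2) by ring, abs_neg, abs_of_pos (by linarith : (0:ℝ) < ε/2)]; linarith)
  have hb : β + ε / 2 ∈ finiteSet θ := hsub (by rw [Metric.mem_ball, Real.dist_eq, show β + ε / 2 - β = ε/2 by ring, abs_of_pos (by linarith : (0:ℝ) < ε/2)]; linarith)
  apply Summable.of_norm_bounded (summable_majorant θ ha hb ((Nat.factorial j) * (ε/4)⁻¹ ^ j))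
  intro k
  exact term_bound θ hθ0 j (by positivity) (by linarith) (by linarith) k

lemma hasDerivAt_Fj (θ : ℤ → ℝ) (hθ0 : ∀ k, 0 ≤ θ k) {β : ℝ} (hβ : β ∈ cgfDom θ) (j : ℕ) :
    HasDerivAt (Fj θ j) (Fj θ (j + 1) β) β := by
  obtain ⟨ε, hε, hball⟩ := Metric.isOpen_iff.mp isOpen_interior β hβ
  have hsub : Metric.ball β ε ⊆ finiteSet θ := hball.trans interior_subset
  have ha : β - ε / 2 ∈ finiteSet θ := hsub (by rw [Metric.mem_ball, Real.dist_eq, show β - ε / 2 - β = -(ε/2) by ring, abs_neg, abs_of_pos (by linarith : (0:ℝ) < ε/2)]; linarith)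
  have hb : β + ε / 2 ∈ finiteSet θ := hsub (by rw [Metric.mem_ball, Real.dist_eq, show β + ε / 2 - β = ε/2 by ring, abs_of_pos (by linarith : (0:ℝ) < ε/2)]; linarith)
  have key := hasDerivAt_tsum_of_isPreconnected
    (u := fun k : ℤ => (Nat.factorial (j+1)) * (ε/4)⁻¹ ^ (j+1) *
      ((Real.exp ((β - ε/2) * k) + Real.exp ((β + ε/2) * k)) * θ k))
    (g := fun (k : ℤ) (x : ℝ) => (k : ℝ) ^ j * (Real.exp (x * k) * θ k))
    (g' := fun (k : ℤ) (x : ℝ) => (k : ℝ) ^ (j+1) * (Real.exp (x * k) * θ k))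
    (summable_majorant θ ha hb _) isOpen_Ioo
    (isPreconnected_Ioo (a := β - ε/4) (b := β + ε/4))
    (fun k x hx => by
      have h1 : HasDerivAt (fun x : ℝ => Real.exp (x * k)) (Real.exp (x * k) * k) x :=
        (hasDerivAt_mul_const (k : ℝ)).exp
      have := (h1.mul_const (θ k)).const_mul ((k : ℝ) ^ j)
      exact this.congr_deriv (by ring))
    (fun k x hx => by
      apply term_bound θ hθ0 (j+1) (by positivity : (0:ℝ) < ε/4)
      · simp at hx; linarith [hx.1]
      · simp at hx; linarith [hx.2])
    (show β ∈ Set.Ioo (β - ε/4) (β + ε/4) from Set.mem_Ioo.mpr ⟨by linarith, by linarith⟩)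
    (summable_pow_mul θ hθ0 hβ j)
    (show β ∈ Set.Ioo (β - ε/4) (β + ε/4) from Set.mem_Ioo.mpr ⟨by linarith, by linarith⟩)
  exact key

lemma Fj_continuousAt (θ : ℤ → ℝ) (hθ0 : ∀ k, 0 ≤ θ k) {β : ℝ} (hβ : β ∈ cgfDom θ) (j : ℕ) :
    ContinuousAt (Fj θ j) β := (hasDerivAt_Fj θ hθ0 hβ j).continuousAt

lemma Fj_zero_pos (θ : ℤ → ℝ) (hθ0 : ∀ k, 0 ≤ θ k) (hsupp : twoPointSupport θ) {β : ℝ}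
    (hβ : β ∈ cgfDom θ) : 0 < Fj θ 0 β := by
  obtain ⟨k₁, _, _, hk₁, _⟩ := hsupp
  have hsummable := summable_pow_mul θ hθ0 hβ 0
  have hterm : (0:ℝ) < (k₁ : ℝ) ^ 0 * (Real.exp (β * k₁) * θ k₁) := by
    simp only [pow_zero, one_mul]
    exact mul_pos (Real.exp_pos _) (lt_of_le_of_ne (hθ0 k₁) (Ne.symm hk₁))
  exact lt_of_lt_of_le hterm (Summable.le_tsum hsummable k₁ (fun k _ =>
    mul_nonneg (by positivity) (mul_nonneg (Real.exp_pos _).le (hθ0 k))))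

lemma hasDerivAt_cgf (θ : ℤ → ℝ) (hθ0 : ∀ k, 0 ≤ θ k) (hsupp : twoPointSupport θ) {β : ℝ}
    (hβ : β ∈ cgfDom θ) :
    HasDerivAt (cgf θ) (Fj θ 1 β / Fj θ 0 β) β := by
  have hF0 : Fj θ 0 = fun x => ∑' k : ℤ, Real.exp (x * k) * θ k := by
    funext x; unfold Fj; congr 1; funext k; rw [pow_zero, one_mul]
  have h := (hasDerivAt_Fj θ hθ0 hβ 0).log (ne_of_gt (Fj_zero_pos θ hθ0 hsupp hβ))
  have : cgf θ = fun x => Real.log (Fj θ 0 x) := by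
    funext x; rw [hF0]; rfl
  rw [this]
  simpa using h

/-- The second-derivative formula. -/
def Gfun (θ : ℤ → ℝ) (β : ℝ) : ℝ :=
  (Fj θ 2 β * Fj θ 0 β - (Fj θ 1 β) ^ 2) / (Fj θ 0 β) ^ 2

lemma iteratedDeriv_two_cgf (θ : ℤ → ℝ) (hθ0 : ∀ k, 0 ≤ θ k) (hsupp : twoPointSupport θ)
    {β : ℝ} (hβ : β ∈ cgfDom θ) :
    iteratedDeriv 2 (cgf θ) β = Gfun θ β := by
  rw [show (2:ℕ) = 1 + 1 from rfl, iteratedDeriv_succ, iteratedDeriv_one]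
  have hEv : deriv (cgf θ) =ᶠ[𝓝 β] fun x => Fj θ 1 x / Fj θ 0 x := by
    filter_upwards [isOpen_interior.mem_nhds hβ] with x hx
    exact (hasDerivAt_cgf θ hθ0 hsupp hx).deriv
  rw [hEv.deriv_eq]
  have hdiv : HasDerivAt (fun x => Fj θ 1 x / Fj θ 0 x)
      ((Fj θ 2 β * Fj θ 0 β - Fj θ 1 β * Fj θ 1 β) / (Fj θ 0 β) ^ 2) β := by
    have := (hasDerivAt_Fj θ hθ0 hβ 1).div (hasDerivAt_Fj θ hθ0 hβ 0)
      (ne_of_gt (Fj_zero_pos θ hθ0 hsupp hβ))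
    exact this
  rw [hdiv.deriv, Gfun]
  ring_nf

lemma Gfun_pos (θ : ℤ → ℝ) (hθ0 : ∀ k, 0 ≤ θ k) (hsupp : twoPointSupport θ) {β : ℝ}
    (hβ : β ∈ cgfDom θ) : 0 < Gfun θ β := by
  obtain ⟨k₁, k₂, hk12, hk₁, hk₂⟩ := hsupp
  set w : ℤ → ℝ := fun k => Real.exp (β * k) * θ k with hw
  have hw0 : ∀ k, 0 ≤ w k := fun k => mul_nonneg (Real.exp_pos _).le (hθ0 k)
  have hs0 : Summable w := by
    have := summable_pow_mul θ hθ0 hβ 0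
    apply this.congr; intro k; rw [pow_zero, one_mul]
  have hs1 : Summable fun k : ℤ => (k : ℝ) * w k := by
    have := summable_pow_mul θ hθ0 hβ 1
    apply this.congr; intro k; rw [pow_one]
  have hs2 : Summable fun k : ℤ => (k : ℝ) ^ 2 * w k := summable_pow_mul θ hθ0 hβ 2
  have hF0pos : 0 < Fj θ 0 β := Fj_zero_pos θ hθ0 ⟨k₁, k₂, hk12, hk₁, hk₂⟩ hβ
  set μ : ℝ := Fj θ 1 β / Fj θ 0 β with hμ
  have hTsummable : Summable fun k : ℤ => ((k : ℝ) - μ) ^ 2 * w k := by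
    apply Summable.congr ((hs2.sub (hs1.mul_left (2 * μ))).add (hs0.mul_left (μ ^ 2)))
    intro k; ring
  set T : ℝ := ∑' k : ℤ, ((k : ℝ) - μ) ^ 2 * w k with hT
  have hT_eq : T = Fj θ 2 β - 2 * μ * Fj θ 1 β + μ ^ 2 * Fj θ 0 β := by
    rw [hT]
    have h1 : (fun k : ℤ => ((k : ℝ) - μ) ^ 2 * w k)
        = fun k : ℤ => ((k : ℝ) ^ 2 * w k - 2 * μ * ((k : ℝ) * w k)) + μ ^ 2 * w k := by
      funext k; ring
    rw [h1, Summable.tsum_add (hs2.sub (hs1.mul_left (2 * μ))) (hs0.mul_left (μ ^ 2)),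
      Summable.tsum_sub hs2 (hs1.mul_left (2 * μ)), tsum_mul_left, tsum_mul_left]
    have e0 : ∑' k : ℤ, w k = Fj θ 0 β := by
      unfold Fj; congr 1; funext k; rw [pow_zero, one_mul]
    have e1 : ∑' k : ℤ, (k : ℝ) * w k = Fj θ 1 β := by
      unfold Fj; congr 1; funext k; rw [pow_one]
    have e2 : ∑' k : ℤ, (k : ℝ) ^ 2 * w k = Fj θ 2 β := rfl
    rw [e0, e1, e2]
  have hT_pos : 0 < T := by
    have hle : ∑ k ∈ ({k₁, k₂} : Finset ℤ), ((k : ℝ) - μ) ^ 2 * w k ≤ T := by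
      apply Summable.sum_le_tsum _ (fun k _ => mul_nonneg (sq_nonneg _) (hw0 k)) hTsummable
    rw [Finset.sum_pair hk12] at hle
    have hw₁ : 0 < w k₁ := mul_pos (Real.exp_pos _) (lt_of_le_of_ne (hθ0 k₁) (Ne.symm hk₁))
    have hw₂ : 0 < w k₂ := mul_pos (Real.exp_pos _) (lt_of_le_of_ne (hθ0 k₂) (Ne.symm hk₂))
    have hne : ((k₁ : ℝ) - μ) ≠ 0 ∨ ((k₂ : ℝ) - μ) ≠ 0 := by
      by_contra h
      push_neg at h
      have : (k₁ : ℝ) = (k₂ : ℝ) := by linarith [sub_eq_zero.mp h.1, sub_eq_zero.mp h.2]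
      exact hk12 (by exact_mod_cast this)
    refine lt_of_lt_of_le ?_ hle
    rcases hne with h | h
    · have h1 : 0 < ((k₁ : ℝ) - μ) ^ 2 * w k₁ := mul_pos (by positivity) hw₁
      have h2 : 0 ≤ ((k₂ : ℝ) - μ) ^ 2 * w k₂ := mul_nonneg (sq_nonneg _) (hw0 k₂)
      linarith
    · have h1 : 0 < ((k₂ : ℝ) - μ) ^ 2 * w k₂ := mul_pos (by positivity) hw₂
      have h2 : 0 ≤ ((k₁ : ℝ) - μ) ^ 2 * w k₁ := mul_nonneg (sq_nonneg _) (hw0 k₁)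
      linarith
  have hnum : Fj θ 2 β * Fj θ 0 β - (Fj θ 1 β) ^ 2 = T * Fj θ 0 β := by
    rw [hT_eq, hμ]
    field_simp
    ring
  rw [Gfun, hnum]
  exact div_pos (mul_pos hT_pos hF0pos) (by positivity)

lemma sigma_lower_bound (θ : ℤ → ℝ) (hθ0 : ∀ k, 0 ≤ θ k) (hsupp : twoPointSupport θ)
    {K : Set ℝ} (hK : IsCompact K) (hKD : K ⊆ cgfDom θ) (hne : K.Nonempty) :
    ∃ m : ℝ, 0 < m ∧ ∀ β ∈ K, m ≤ sigmaT θ β := by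
  have hGcont : ContinuousOn (Gfun θ) K := by
    intro β hβ
    have hd := hKD hβ
    have hF0 := Fj_continuousAt θ hθ0 hd 0
    have hF1 := Fj_continuousAt θ hθ0 hd 1
    have hF2 := Fj_continuousAt θ hθ0 hd 2
    exact (((hF2.mul hF0).sub (hF1.pow 2)).div (hF0.pow 2)
      (pow_ne_zero 2 (ne_of_gt (Fj_zero_pos θ hθ0 hsupp hd)))).continuousWithinAt
  obtain ⟨β₀, hβ₀K, hmin⟩ := hK.exists_isMinOn hne hGcont
  refine ⟨Real.sqrt (Gfun θ β₀), Real.sqrt_pos.mpr (Gfun_pos θ hθ0 hsupp (hKD hβ₀K)), ?_⟩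
  intro β hβ
  rw [sigmaT, iteratedDeriv_two_cgf θ hθ0 hsupp (hKD hβ)]
  exact Real.sqrt_le_sqrt (hmin hβ)

end CGFAux


lemma rpow_neg_half_aux {x : ℝ} (hx : 0 < x) (j : ℕ) :
    x ^ (-(j : ℝ) / 2) = ((Real.sqrt x) ^ j)⁻¹ := by
  rw [show -(j : ℝ) / 2 = (1 / 2) * (-(j : ℝ)) by ring, Real.rpow_mul hx.le,
    ← Real.sqrt_eq_rpow, Real.rpow_neg (Real.sqrt_nonneg x), Real.rpow_natCast]

set_option maxHeartbeats 1000000 in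
/-- uniform Taylor-type bound, along the rescaled imaginary direction, for
holomorphic functions `w_n` converging exponentially fast to `w_∞` on a neighbourhood of
`K ⊂ 𝒟_φ ⊂ ℝ ⊂ ℂ`. -/
theorem wn_taylor_uniform_bound
    (θ : ℤ → ℝ) (hθ0 : ∀ k, 0 ≤ θ k) (hθs : Summable θ) (hmass : 0 < ∑' k : ℤ, θ k)
    (hsupp : twoPointSupport θ)
    (K : Set ℝ) (hK : IsCompact K) (hKD : K ⊆ cgfDom θ)
    (r : ℕ) (ε₀ : ℝ) (hε₀ : 0 < ε₀)
    (w : ℕ → ℂ → ℂ) (winf : ℂ → ℂ)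
    (hw : ∀ n : ℕ, 1 ≤ n →
      DifferentiableOn ℂ (w n) {z : ℂ | infDist z (Complex.ofReal '' K) < 2 * ε₀})
    (hwinf : DifferentiableOn ℂ winf {z : ℂ | infDist z (Complex.ofReal '' K) < 2 * ε₀})
    (A c : ℝ) (hc : 0 < c)
    (hconv : ∀ n : ℕ, 1 ≤ n → ∀ z : ℂ, infDist z (Complex.ofReal '' K) ≤ ε₀ →
      ‖w n z - winf z‖ ≤ A * Real.exp (-c * n)) :
    ∃ ε > 0, ∃ M : ℝ, ∀ β ∈ K, ∀ n : ℕ, 1 ≤ n → ∀ s : ℂ,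
      ‖s‖ ≤ ε * sigmaT θ β * Real.sqrt n →
      ‖w n ((β : ℂ) + Complex.I * s / (((sigmaT θ β : ℝ) : ℂ) * ((Real.sqrt n : ℝ) : ℂ))) -
          ∑ j ∈ Finset.range (r + 1),
            (((n : ℝ) ^ (-(j : ℝ) / 2) : ℝ) : ℂ) *
              (iteratedDeriv j winf (β : ℂ) / (Nat.factorial j)) *
                (Complex.I * s / ((sigmaT θ β : ℝ) : ℂ)) ^ j‖ ≤
        M * (n : ℝ) ^ (-((r : ℝ) + 1) / 2) * (1 + ‖s‖ ^ (r + 1)) := by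
  rcases K.eq_empty_or_nonempty with hKe | hKne
  · refine ⟨1, one_pos, 0, ?_⟩
    intro β hβ
    rw [hKe] at hβ
    exact absurd hβ (Set.notMem_empty β)
  obtain ⟨m, hm, hmσ⟩ := CGFAux.sigma_lower_bound θ hθ0 hsupp hK hKD hKne
  set T : Set ℂ := Complex.ofReal '' K with hT
  have hTcompact : IsCompact T := hK.image Complex.continuous_ofReal
  have hTne : T.Nonempty := hKne.image _
  set S : Set ℂ := {z : ℂ | infDist z T ≤ ε₀} with hS
  have hSU : S ⊆ {z : ℂ | infDist z T < 2 * ε₀} := fun z hz =>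
    show infDist z T < 2 * ε₀ from lt_of_le_of_lt hz (by linarith)
  have hSclosed : IsClosed S := isClosed_le (continuous_infDist_pt T) continuous_const
  obtain ⟨R₀, hR₀⟩ := hTcompact.isBounded.subset_closedBall 0
  have hScompact : IsCompact S := by
    apply (isCompact_closedBall (0 : ℂ) (R₀ + ε₀)).of_isClosed_subset hSclosed
    intro z hz
    obtain ⟨t, htT, hdist⟩ := hTcompact.exists_infDist_eq_dist hTne z
    have h1 : dist z t ≤ ε₀ := by rw [← hdist]; exact hz
    have h2 : dist t 0 ≤ R₀ := hR₀ htT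
    rw [Metric.mem_closedBall]
    calc dist z 0 ≤ dist z t + dist t 0 := dist_triangle _ _ _
      _ ≤ R₀ + ε₀ := by linarith
  have hwinfS : ContinuousOn winf S := (hwinf.continuousOn).mono hSU
  obtain ⟨B, hB⟩ := hScompact.exists_bound_of_continuousOn hwinfS
  obtain ⟨β₁, hβ₁⟩ := hKne
  have hβ₁S : ((β₁ : ℝ) : ℂ) ∈ S := by
    simp only [hS, Set.mem_setOf_eq]
    calc infDist ((β₁:ℝ):ℂ) T ≤ dist ((β₁:ℝ):ℂ) ((β₁:ℝ):ℂ) :=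
        infDist_le_dist_of_mem ⟨β₁, hβ₁, rfl⟩
      _ = 0 := dist_self _
      _ ≤ ε₀ := hε₀.le
  have hB0 : 0 ≤ B := le_trans (norm_nonneg _) (hB _ hβ₁S)
  -- bound for the exponential term
  obtain ⟨M₁, hM₁⟩ : ∃ M₁ : ℝ, ∀ n : ℕ, |A| * (n : ℝ) ^ (r + 1) * Real.exp (-c * n) ≤ M₁ := by
    have h0 : Tendsto (fun x : ℝ => x ^ ((r + 1 : ℕ) : ℝ) * Real.exp (-c * x)) atTop (𝓝 0) :=
      tendsto_rpow_mul_exp_neg_mul_atTop_nhds_zero _ c hc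
    have h1 : Tendsto (fun n : ℕ => |A| * ((n : ℝ) ^ (r + 1) * Real.exp (-c * n))) atTop
        (𝓝 (|A| * 0)) := by
      apply Tendsto.const_mul
      have := h0.comp (tendsto_natCast_atTop_atTop (R := ℝ))
      apply this.congr
      intro n
      simp only [Function.comp_apply]
      rw [Real.rpow_natCast]
    have h2 := h1.bddAbove_range
    obtain ⟨M₁, hM₁⟩ := h2
    refine ⟨M₁, fun n => ?_⟩
    have := hM₁ (Set.mem_range_self n)
    rw [← mul_assoc] at this
    exact this
  have hM₁0 : 0 ≤ M₁ := le_trans (by positivity) (hM₁ 1)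
  set C₂ : ℝ := 2 * B * ((m * ε₀)⁻¹) ^ (r + 1) with hC₂
  have hC₂0 : 0 ≤ C₂ := by positivity
  refine ⟨ε₀ / 2, by positivity, M₁ + C₂, ?_⟩
  intro β hβ n hn s hs
  set σ : ℝ := sigmaT θ β with hσdef
  have hσm : m ≤ σ := hmσ β hβ
  have hσ : 0 < σ := lt_of_lt_of_le hm hσm
  have hn1 : (1 : ℝ) ≤ (n : ℝ) := by exact_mod_cast hn
  have hn0 : (0 : ℝ) < (n : ℝ) := by linarith
  have hsq : 0 < Real.sqrt n := Real.sqrt_pos.mpr hn0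
  set y : ℂ := Complex.I * s / (((σ : ℝ) : ℂ) * ((Real.sqrt n : ℝ) : ℂ)) with hy
  have hσC : ((σ : ℝ) : ℂ) ≠ 0 := by exact_mod_cast hσ.ne'
  have hsqC : ((Real.sqrt n : ℝ) : ℂ) ≠ 0 := by exact_mod_cast hsq.ne'
  have hynorm : ‖y‖ = ‖s‖ / (σ * Real.sqrt n) := by
    rw [hy, norm_div, norm_mul, Complex.norm_I, one_mul, norm_mul, Complex.norm_real,
      Complex.norm_real, Real.norm_eq_abs, Real.norm_eq_abs, abs_of_pos hσ, abs_of_pos hsq]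
  have hyle : ‖y‖ ≤ ε₀ / 2 := by
    rw [hynorm, div_le_iff₀ (by positivity)]
    calc ‖s‖ ≤ ε₀ / 2 * σ * Real.sqrt n := hs
      _ = ε₀ / 2 * (σ * Real.sqrt n) := by ring
  -- the point z and its membership
  set z : ℂ := (β : ℂ) + y with hz
  have hβT : ((β : ℝ) : ℂ) ∈ T := ⟨β, hβ, rfl⟩
  have hdistz : dist z ((β : ℝ) : ℂ) = ‖y‖ := by
    rw [hz, dist_eq_norm, add_sub_cancel_left]
  have hzS : infDist z T ≤ ε₀ := by
    calc infDist z T ≤ dist z ((β : ℝ) : ℂ) := infDist_le_dist_of_mem hβT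
      _ = ‖y‖ := hdistz
      _ ≤ ε₀ := by linarith
  have hballS : Metric.closedBall ((β : ℝ) : ℂ) ε₀ ⊆ S := by
    intro ζ hζ
    simp only [hS, Set.mem_setOf_eq]
    calc infDist ζ T ≤ dist ζ ((β : ℝ) : ℂ) := infDist_le_dist_of_mem hβT
      _ ≤ ε₀ := Metric.mem_closedBall.mp hζ
  -- Taylor remainder
  have htay := taylor_remainder_bound hε₀
    (hwinf.mono (hballS.trans hSU)) (fun ζ hζ => hB ζ (hballS hζ)) r y hyle
  -- exponential closeness
  have hconv' : ‖w n z - winf z‖ ≤ |A| * Real.exp (-c * n) := by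
    refine le_trans (hconv n hn z hzS) ?_
    apply mul_le_mul_of_nonneg_right (le_abs_self A) (Real.exp_pos _).le
  -- sum identification
  have hsum_eq : (∑ j ∈ Finset.range (r + 1),
      (((n : ℝ) ^ (-(j : ℝ) / 2) : ℝ) : ℂ) *
        (iteratedDeriv j winf (β : ℂ) / (Nat.factorial j)) *
          (Complex.I * s / ((σ : ℝ) : ℂ)) ^ j)
      = ∑ j ∈ Finset.range (r + 1),
        (iteratedDeriv j winf (β : ℂ) / (Nat.factorial j)) * y ^ j := by
    apply Finset.sum_congr rfl
    intro j _
    have hr : (((n : ℝ) ^ (-(j : ℝ) / 2) : ℝ) : ℂ) = ((((Real.sqrt n) ^ j : ℝ)) : ℂ)⁻¹ := by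
      rw [rpow_neg_half_aux hn0 j]
      push_cast
      ring
    rw [hr, hy]
    have hsqpC : (((Real.sqrt n) ^ j : ℝ) : ℂ) = ((Real.sqrt n : ℝ) : ℂ) ^ j := by push_cast; ring
    rw [hsqpC]
    field_simp
    ring_nf
    rw [inv_pow (((Real.sqrt n : ℝ) : ℂ)) j, mul_inv_cancel_right₀ (pow_ne_zero j hsqC)]
  -- main estimate
  set I : ℝ := ((Real.sqrt n) ^ (r + 1))⁻¹ with hI
  have hI0 : 0 < I := by positivity
  have hrpowI : (n : ℝ) ^ (-((r : ℝ) + 1) / 2) = I := by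
    rw [hI, ← rpow_neg_half_aux hn0 (r + 1)]
    norm_num
  have hterm1 : ‖w n z - winf z‖ ≤ M₁ * I := by
    refine le_trans hconv' ?_
    have h1 := hM₁ n
    have h2 : (Real.sqrt n) ^ (r + 1) ≤ (n : ℝ) ^ (r + 1) := by
      apply pow_le_pow_left₀ (Real.sqrt_nonneg _)
      calc Real.sqrt n ≤ Real.sqrt ((n : ℝ) ^ 2) := Real.sqrt_le_sqrt (by nlinarith)
        _ = (n : ℝ) := Real.sqrt_sq hn0.le
    have h3 : |A| * Real.exp (-c * n) ≤ M₁ / (n : ℝ) ^ (r + 1) := by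
      rw [le_div_iff₀ (by positivity)]
      calc |A| * Real.exp (-c * n) * (n : ℝ) ^ (r + 1)
          = |A| * (n : ℝ) ^ (r + 1) * Real.exp (-c * n) := by ring
        _ ≤ M₁ := h1
    refine le_trans h3 ?_
    rw [div_eq_mul_inv, hI]
    apply mul_le_mul_of_nonneg_left ?_ hM₁0
    apply inv_anti₀ (by positivity) h2
  have hterm2 : ‖winf z - ∑ j ∈ Finset.range (r + 1),
      (iteratedDeriv j winf (β : ℂ) / (Nat.factorial j)) * y ^ j‖
      ≤ C₂ * I * ‖s‖ ^ (r + 1) := by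
    refine le_trans htay ?_
    have ht0 : 0 ≤ ‖y‖ / ε₀ := by positivity
    have hq : ‖y‖ / ε₀ ≤ ‖s‖ / (m * ε₀ * Real.sqrt n) := by
      rw [hynorm, div_div, div_le_div_iff₀ (by positivity) (by positivity)]
      have hww : ‖s‖ * m ≤ ‖s‖ * σ := mul_le_mul_of_nonneg_left hσm (norm_nonneg s)
      calc ‖s‖ * (m * ε₀ * Real.sqrt n) = (‖s‖ * m) * (ε₀ * Real.sqrt n) := by ring
        _ ≤ (‖s‖ * σ) * (ε₀ * Real.sqrt n) :=
            mul_le_mul_of_nonneg_right hww (by positivity)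
        _ = ‖s‖ * (σ * Real.sqrt n * ε₀) := by ring
    have hpow : (‖y‖ / ε₀) ^ (r + 1) ≤ (‖s‖ / (m * ε₀ * Real.sqrt n)) ^ (r + 1) :=
      pow_le_pow_left₀ ht0 hq _
    have hexp : (‖s‖ / (m * ε₀ * Real.sqrt n)) ^ (r + 1)
        = ‖s‖ ^ (r + 1) * ((m * ε₀)⁻¹) ^ (r + 1) * I := by
      have h₁ : (m * ε₀ : ℝ) ≠ 0 := by positivity
      have h₂ : Real.sqrt n ≠ 0 := hsq.ne'
      rw [hI, div_pow, mul_pow]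
      rw [inv_pow, div_eq_mul_inv, mul_inv, mul_assoc]
    calc 2 * B * (‖y‖ / ε₀) ^ (r + 1)
        ≤ 2 * B * (‖s‖ ^ (r + 1) * ((m * ε₀)⁻¹) ^ (r + 1) * I) := by
          apply mul_le_mul_of_nonneg_left (hpow.trans_eq hexp) (by positivity)
      _ = C₂ * I * ‖s‖ ^ (r + 1) := by rw [hC₂]; ring
  rw [hsum_eq]
  calc ‖w n z - ∑ j ∈ Finset.range (r + 1),
        (iteratedDeriv j winf (β : ℂ) / (Nat.factorial j)) * y ^ j‖
      = ‖(w n z - winf z) + (winf z - ∑ j ∈ Finset.range (r + 1),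
        (iteratedDeriv j winf (β : ℂ) / (Nat.factorial j)) * y ^ j)‖ := by
        rw [sub_add_sub_cancel]
    _ ≤ ‖w n z - winf z‖ + ‖winf z - ∑ j ∈ Finset.range (r + 1),
        (iteratedDeriv j winf (β : ℂ) / (Nat.factorial j)) * y ^ j‖ := norm_add_le _ _
    _ ≤ M₁ * I + C₂ * I * ‖s‖ ^ (r + 1) := add_le_add hterm1 hterm2
    _ ≤ (M₁ + C₂) * I * (1 + ‖s‖ ^ (r + 1)) := by
        nlinarith [mul_nonneg (mul_nonneg hM₁0 hI0.le) (pow_nonneg (norm_nonneg s) (r + 1)),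
          mul_nonneg hC₂0 hI0.le]
    _ = (M₁ + C₂) * (n : ℝ) ^ (-((r : ℝ) + 1) / 2) * (1 + ‖s‖ ^ (r + 1)) := by rw [hrpowI]


end
end
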